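/- arXiv:2103.14609 — 2 statements merged into one kernel-verified Lean document; each statement's English description precedes it below -/
import Mathlib

section
/- Let w be an infinite non-ultimately periodic word and u ∈ Π_γ(w). If i ≤ j, w[i,j] is a palindrome, and w[i,j] contains no centered standard palindrome (i.e., CnStdPal_{w,u}(i,j) = ∅), then the number of u-runs entirely contained in [i,j] is at most 2. -/
open scoped BigOperators

variable {α : Type*}

/-- The factor of the infinite word `w` (1-indexed) from position `i` to position `j`. -/
def Subword (w : ℕ → α) (i j : ℕ) : List α :=
  (List.range (j + 1 - i)).map fun n => w (i + n)

/-- `t` is a finite factor of the infinite word `w` (positions are 1-indexed). -/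
def IsFactorI (w : ℕ → α) (t : List α) : Prop :=
  ∃ i, 1 ≤ i ∧ t = (List.range t.length).map fun n => w (i + n)

/-- `t` occurs infinitely often in the infinite word `w`. -/
def RecurrentI (w : ℕ → α) (t : List α) : Prop :=
  ∀ N, ∃ i, N ≤ i ∧ t = (List.range t.length).map fun n => w (i + n)

/-- The infinite word `w` is ultimately periodic. -/
def UltimatelyPeriodic (w : ℕ → α) : Prop :=
  ∃ p N, 1 ≤ p ∧ ∀ n, N ≤ n → w (n + p) = w n

/-- The `q`-power `u^q` of a finite word `u`, for a rational exponent `q ≥ 1`: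
`u^⌊q⌋` followed by the prefix of `u` of length `(q - ⌊q⌋)·|u|`. -/
def fracPow (u : List α) (q : ℚ) : List α :=
  (List.replicate ⌊q⌋.toNat u).flatten ++
    u.take (⌊q * (u.length : ℚ)⌋.toNat - ⌊q⌋.toNat * u.length)

/-- A nonempty word is primitive if it is not a (possibly fractional) `q`-power,
`q ≥ 2`, of any word. -/
def Primitive (v : List α) : Prop :=
  v ≠ [] ∧ ∀ (t : List α) (q : ℚ), 2 ≤ q → v ≠ fracPow t q

/-- `PowFactor u`: finite factors of `u^∞` together with finite factors of `(u^R)^∞`. -/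
def IsPowFactor (u t : List α) : Prop :=
  (∃ k, t <:+: (List.replicate k u).flatten) ∨ (∃ k, t <:+: (List.replicate k u.reverse).flatten)

/-- `(i,j)` is a `u`-run of the infinite word `w` (with the fixed parameter `γ`). -/
def IsRun (γ : ℕ) (w : ℕ → α) (u : List α) (i j : ℕ) : Prop :=
  i < j ∧ (γ - 2) * u.length ≤ j - i + 1 ∧ u.length + 1 < i ∧
  IsPowFactor u (Subword w (i - u.length) (j + u.length)) ∧
  ¬ IsPowFactor u (Subword w (i - u.length - 1) (j + u.length)) ∧
  ¬ IsPowFactor u (Subword w (i - u.length) (j + u.length + 1))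

/-- Membership in the set `Π_γ(w)`. -/
def InPi (γ : ℕ) (w : ℕ → α) (u : List α) : Prop :=
  Primitive u ∧ IsFactorI w u ∧
  ¬ IsPowFactor u ((List.range (γ * u.length)).map fun n => w (1 + n)) ∧
  ∃ v : List α, v.length = u.length ∧ IsPowFactor u v ∧
    RecurrentI w ((List.replicate γ v).flatten)

/-- Palindromic length: the minimal number of nonempty palindromes whose
concatenation equals `v`. -/
noncomputable def PL (v : List α) : ℕ :=
  sInf {k | ∃ ps : List (List α), ps.flatten = v ∧ ps.length = k ∧
    ∀ p ∈ ps, p ≠ [] ∧ p.reverse = p}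

/-- `maxPL v`: the maximum of `PL` over the factors of `v`. -/
noncomputable def maxPL (v : List α) : ℕ :=
  sSup {n | ∃ t, t <:+: v ∧ n = PL t}

/-- `(I, J, W, Z, D)` is the run factorization `factrz(w,u)` of `w`:
`(I k, J k)` enumerates the `u`-runs in increasing order, `W k` is the inter-run
factor, and `w[I k, J k] = (Z k)^(D k)`. -/
structure IsFactrz (γ : ℕ) (w : ℕ → α) (u : List α)
    (I J : ℕ → ℕ) (W Z : ℕ → List α) (D : ℕ → ℚ) : Prop where
  run : ∀ k, 1 ≤ k → IsRun γ w u (I k) (J k)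
  mono : ∀ k, 1 ≤ k → I k < I (k + 1)
  complete : ∀ i j, IsRun γ w u i j → ∃ k, 1 ≤ k ∧ I k = i ∧ J k = j
  j0 : J 0 = 0
  wdef : ∀ k, 1 ≤ k → W k = Subword w (J (k - 1) + 1) (I k - 1)
  zlen : ∀ k, 1 ≤ k → (Z k).length = u.length
  zpow : ∀ k, 1 ≤ k → IsPowFactor u (Z k)
  dge : ∀ k, 1 ≤ k → 1 ≤ D k
  zd : ∀ k, 1 ≤ k → Subword w (I k) (J k) = fracPow (Z k) (D k)

/-- Membership in `Φ_h` (with fixed parameter `γ`). -/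
def InPhi (γ h : ℕ) (φ : ℚ → ℚ) : Prop :=
  ∀ q : ℚ, 1 ≤ q → ((γ : ℚ) - 2 ≤ φ q ∧ φ q < (h : ℚ) ∧ ∃ n : ℕ, q - φ q = (n : ℚ))

/-- The finite prefix `W 1 (Z 1)^(E 1) ⋯ W k (Z k)^(E k)` of the reduced word. -/
def redPrefix (W Z : ℕ → List α) (E : ℕ → ℚ) : ℕ → List α
  | 0 => []
  | k + 1 => redPrefix W Z E k ++ W (k + 1) ++ fracPow (Z (k + 1)) (E (k + 1))

/-- `x` is the reduced word `W 1 (Z 1)^(E 1) W 2 (Z 2)^(E 2) ⋯` (1-indexed). -/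
def IsReduce (W Z : ℕ → List α) (E : ℕ → ℚ) (x : ℕ → α) : Prop :=
  ∀ k, redPrefix W Z E k = (List.range (redPrefix W Z E k).length).map fun n => x (1 + n)

/-- Position `i` of `w` is not covered by any `u`-run. -/
def RpoDom (γ : ℕ) (w : ℕ → α) (u : List α) (i : ℕ) : Prop :=
  1 ≤ i ∧ ∀ a b, IsRun γ w u a b → ¬ (a ≤ i ∧ i ≤ b)

/-- `κ(j) = Σ_{i ≤ j} (|W i| + |(Z i)^(D i)|)`, the end position of the `j`-th run. -/
def kappa (W Z : ℕ → List α) (D : ℕ → ℚ) (j : ℕ) : ℕ :=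
  ∑ i ∈ Finset.Icc 1 j, ((W i).length + (fracPow (Z i) (D i)).length)

/-- The graph of the position bijection `rpo`: position `i` of `w` (with exponent
sequence `D`) corresponds to position `ib` of the reduced word (exponents `E`). -/
def RpoRel (W Z : ℕ → List α) (D E : ℕ → ℚ) (i ib : ℕ) : Prop :=
  ∃ j, kappa W Z D j < i ∧ i ≤ kappa W Z D (j + 1) ∧
    ib = kappa W Z E j + (i - kappa W Z D j)

/-- There are at most `N` `u`-runs entirely contained in `[a,b]`. -/
def RunCountLe (γ : ℕ) (w : ℕ → α) (u : List α) (a b N : ℕ) : Prop :=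
  ∀ S : Finset (ℕ × ℕ), (∀ p ∈ S, IsRun γ w u p.1 p.2 ∧ a ≤ p.1 ∧ p.2 ≤ b) → S.card ≤ N

/-- `(i,j)` is a standard palindrome of `w` with respect to `u`. -/
def IsStdPal (γ : ℕ) (w : ℕ → α) (u : List α) (i j : ℕ) : Prop :=
  i ≤ j ∧ RpoDom γ w u i ∧ RpoDom γ w u j ∧
  (Subword w (i - 1) (j + 1)).reverse = Subword w (i - 1) (j + 1) ∧
  (∀ m, i - 1 ≤ m → m ≤ min (i + u.length - 1) j → RpoDom γ w u m) ∧
  (∀ m, max (j + 1 - u.length) i ≤ m → m ≤ j + 1 → RpoDom γ w u m) ∧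
  (∀ m, i ≤ m → m ≤ j → (RpoDom γ w u m ↔ RpoDom γ w u (i + j - m)))

/-- `(m1,m2)` is a centered standard palindrome of `w[i,j]`. -/
def IsCnStdPal (γ : ℕ) (w : ℕ → α) (u : List α) (i j m1 m2 : ℕ) : Prop :=
  IsStdPal γ w u m1 m2 ∧ i ≤ m1 ∧ m2 ≤ j ∧ m1 - i = j - m2





def Ph (w : ℕ → α) (v : List α) (p q : ℕ) : Prop :=
  ∃ r, ∀ n, n ≤ q - p → v[(r + n) % v.length]? = some (w (p + n))

lemma SwInfra.subword_get? (w : ℕ → α) (p q n : ℕ) :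
    (Subword w p q)[n]? = if n < q + 1 - p then some (w (p + n)) else none := by
  unfold Subword
  rcases lt_or_ge n (q + 1 - p) with h | h
  · rw [List.getElem?_map, List.getElem?_range h, if_pos h, Option.map_some]
  · rw [if_neg (by omega), List.getElem?_eq_none_iff.mpr (by simpa using h)]

lemma SwInfra.subword_length (w : ℕ → α) (p q : ℕ) : (Subword w p q).length = q + 1 - p := by
  simp [Subword]

lemma SwInfra.length_join_replicate (k : ℕ) (v : List α) :
    ((List.replicate k v).flatten).length = k * v.length := by
  induction k with
  | zero => simp
  | succ k ih => rw [List.replicate_succ, List.flatten_cons, List.length_append, ih, Nat.succ_mul]; omega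

lemma SwInfra.get?_join_replicate (k : ℕ) (v : List α) (m : ℕ) (h : m < k * v.length) :
    ((List.replicate k v).flatten)[m]? = v[m % v.length]? := by
  induction k generalizing m with
  | zero => simp at h
  | succ k ih =>
    have hv : 0 < v.length := by
      rcases Nat.eq_zero_or_pos v.length with h0 | h0
      · rw [h0] at h; simp at h
      · exact h0
    rw [List.replicate_succ, List.flatten_cons]
    rcases lt_or_ge m v.length with hm | hm
    · rw [List.getElem?_append_left hm, Nat.mod_eq_of_lt hm]
    · rw [List.getElem?_append_right hm, ih (m - v.length) (by rw [Nat.succ_mul] at h; omega)]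
      congr 1
      conv_rhs => rw [← Nat.sub_add_cancel hm]
      rw [Nat.add_mod_right]

lemma SwInfra.ph_iff_infix (w : ℕ → α) (v : List α) (hv : v ≠ []) (p q : ℕ) (hpq : p ≤ q) :
    (∃ k, Subword w p q <:+: (List.replicate k v).flatten) ↔ Ph w v p q := by
  have hL : 0 < v.length := List.length_pos_iff.mpr hv
  constructor
  · rintro ⟨k, s, t', hst⟩
    refine ⟨s.length, fun n hn => ?_⟩
    have hn' : n < (Subword w p q).length := by rw [SwInfra.subword_length]; omega
    have h1 : ((List.replicate k v).flatten)[s.length + n]? = some (w (p + n)) := by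
      rw [← hst, List.append_assoc, List.getElem?_append_right (Nat.le_add_right _ _)]
      rw [Nat.add_sub_cancel_left, List.getElem?_append_left hn', subword_get?, if_pos (by omega)]
    have hlt : s.length + n < k * v.length := by
      by_contra hge
      rw [List.getElem?_eq_none_iff.mpr (by rw [SwInfra.length_join_replicate]; omega)] at h1
      simp at h1
    rw [SwInfra.get?_join_replicate _ _ _ hlt] at h1
    exact h1
  · rintro ⟨r, hr⟩
    set L := v.length with hLdef
    refine ⟨r + (q - p) + 2, ?_⟩
    have hlen : ((List.replicate (r + (q - p) + 2) v).flatten).length = (r + (q - p) + 2) * L :=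
      SwInfra.length_join_replicate _ _
    have hbig : ∀ n, n < q + 1 - p → r % L + n < (r + (q - p) + 2) * L := by
      intro n hn
      have h1 : r % L < L := Nat.mod_lt _ hL
      have h2 : (q - p + 2) * L ≤ (r + (q - p) + 2) * L := Nat.mul_le_mul_right _ (by omega)
      have h3 : (q - p) + 2 ≤ (q - p + 2) * L := Nat.le_mul_of_pos_right _ hL
      have h4 : (q - p + 2) * L = (q - p) * L + 2 * L := by ring
      have h5 : q - p ≤ (q - p) * L := Nat.le_mul_of_pos_right _ hL
      omega
    have hkey : Subword w p q
        = (((List.replicate (r + (q - p) + 2) v).flatten).drop (r % L)).take (q + 1 - p) := by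
      apply List.ext_getElem?
      intro n
      rcases lt_or_ge n (q + 1 - p) with hn | hn
      · rw [SwInfra.subword_get?, if_pos hn, List.getElem?_take_of_lt hn, List.getElem?_drop,
          SwInfra.get?_join_replicate _ _ _ (hbig n hn), Nat.mod_add_mod, hr n (by omega)]
      · rw [SwInfra.subword_get?, if_neg (by omega), List.getElem?_eq_none_iff.mpr]
        rw [List.length_take, List.length_drop]
        exact le_trans (min_le_left _ _) (by omega)
    rw [hkey]
    exact ((List.take_prefix _ _).isInfix).trans ((List.drop_suffix _ _).isInfix)

lemma SwInfra.pow_iff (w : ℕ → α) (u : List α) (hu : u ≠ []) {p q : ℕ} (hpq : p ≤ q) :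
    IsPowFactor u (Subword w p q) ↔ (Ph w u p q ∨ Ph w u.reverse p q) := by
  unfold IsPowFactor
  rw [SwInfra.ph_iff_infix w u hu p q hpq, SwInfra.ph_iff_infix w u.reverse (by simpa using hu) p q hpq]

lemma SwInfra.ph_sub {w : ℕ → α} {v : List α} {p q p' q' : ℕ} (h : Ph w v p q)
    (h1 : p ≤ p') (h2' : p' ≤ q') (h2 : q' ≤ q) : Ph w v p' q' := by
  obtain ⟨r, hr⟩ := h
  refine ⟨r + (p' - p), fun n hn => ?_⟩
  have := hr ((p' - p) + n) (by omega)
  rw [show p + (p' - p + n) = p' + n by omega] at this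
  rw [show r + (p' - p) + n = r + (p' - p + n) by omega]
  exact this

lemma SwInfra.pow_sub {w : ℕ → α} {u : List α} (hu : u ≠ []) {p q p' q' : ℕ}
    (h1 : p ≤ p') (h2 : p' ≤ q') (h3 : q' ≤ q)
    (h : IsPowFactor u (Subword w p q)) : IsPowFactor u (Subword w p' q') := by
  rw [SwInfra.pow_iff w u hu (by omega)] at h
  rw [SwInfra.pow_iff w u hu h2]
  rcases h with h | h
  · exact Or.inl (SwInfra.ph_sub h h1 h2 h3)
  · exact Or.inr (SwInfra.ph_sub h h1 h2 h3)

lemma SwInfra.ph_merge {w : ℕ → α} {v1 v2 : List α} {p q p' q' : ℕ}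
    (hlen : v1.length = v2.length) (hL : 0 < v1.length)
    (h1 : Ph w v1 p q) (h2 : Ph w v2 p' q')
    (hpp : p ≤ p') (hpq : p' ≤ q) (hqq : q ≤ q') (hov : v1.length ≤ q - p' + 1) :
    Ph w v1 p q' := by
  set L := v1.length with hLdef
  obtain ⟨r1, hr1⟩ := h1
  obtain ⟨r2, hr2⟩ := h2
  rw [← hlen] at hr2
  have key : ∀ m, m ≤ q' - p' → v1[(r1 + (p' - p) + m) % L]? = some (w (p' + m)) := by
    intro m hm
    have hmL : m % L < L := Nat.mod_lt _ hL
    have hm' : m % L ≤ q - p' := by omega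
    have e1 := hr1 (p' - p + m % L) (by omega)
    rw [show p + (p' - p + m % L) = p' + m % L by omega] at e1
    have e2 := hr2 (m % L) (by omega)
    have e2' := hr2 m hm
    calc v1[(r1 + (p' - p) + m) % L]?
        = v1[(r1 + (p' - p) + m % L) % L]? := by rw [Nat.add_mod_mod]
      _ = some (w (p' + m % L)) := by
            rw [show r1 + (p' - p) + m % L = r1 + (p' - p + m % L) by omega]; exact e1
      _ = v2[(r2 + m % L) % L]? := e2.symm
      _ = v2[(r2 + m) % L]? := by rw [Nat.add_mod_mod]
      _ = some (w (p' + m)) := e2'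
  refine ⟨r1, fun n hn => ?_⟩
  rcases le_or_gt n (q - p) with hc | hc
  · exact hr1 n hc
  · have := key (n - (p' - p)) (by omega)
    rw [show r1 + (p' - p) + (n - (p' - p)) = r1 + n by omega,
      show p' + (n - (p' - p)) = p + n by omega] at this
    exact this

lemma SwInfra.mod_helper (L X n : ℕ) (hL : 0 < L) (hn : n ≤ X) :
    (X - n) % L = L - 1 - (2 * L - 1 - X % L + n) % L := by
  set r' := 2 * L - 1 - X % L with hr'
  have hXL : X % L < L := Nat.mod_lt _ hL
  have hA : (X - n) % L < L := Nat.mod_lt _ hL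
  have hB : (r' + n) % L < L := Nat.mod_lt _ hL
  have e1 : (X - n) + (r' + n) = L * (X / L) + (2 * L - 1) := by
    have h2 : X % L + L * (X / L) = X := Nat.mod_add_div X L
    omega
  have e2 : ((X - n) + (r' + n)) % L = (2 * L - 1) % L := by
    rw [e1, Nat.mul_add_mod]
  have e3 : (2 * L - 1) % L = L - 1 := by
    rw [show 2 * L - 1 = L + (L - 1) by omega, Nat.add_mod_left, Nat.mod_eq_of_lt (by omega)]
  have e4 : ((X - n) % L + (r' + n) % L) % L = L - 1 := by
    rw [Nat.add_mod] at e2; rw [e2, e3]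
  have e5 : (X - n) % L + (r' + n) % L < 2 * L := by omega
  rcases lt_or_ge ((X - n) % L + (r' + n) % L) L with hx | hx
  · rw [Nat.mod_eq_of_lt hx] at e4; omega
  · have : (X - n) % L + (r' + n) % L - L < L := by omega
    rw [Nat.mod_eq_sub_mod hx, Nat.mod_eq_of_lt this] at e4
    omega

lemma SwInfra.ph_mirror {w : ℕ → α} {v : List α} {i j p q : ℕ}
    (hpal : ∀ m, i ≤ m → m ≤ j → w m = w (i + j - m))
    (hL : 0 < v.length)
    (h : Ph w v p q) (hip : i ≤ p) (hpq : p ≤ q) (hqj : q ≤ j) :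
    Ph w v.reverse (i + j - q) (i + j - p) := by
  obtain ⟨r, hr⟩ := h
  set L := v.length with hLdef
  refine ⟨2 * L - 1 - (r + (q - p)) % L, fun n hn => ?_⟩
  have hn' : n ≤ q - p := by omega
  have e1 := hr (q - p - n) (by omega)
  rw [show p + (q - p - n) = q - n by omega] at e1
  have e2 : w (q - n) = w (i + j - q + n) := by
    rw [hpal (q - n) (by omega) (by omega)]
    congr 1; omega
  rw [List.length_reverse]
  rw [List.getElem?_reverse (show (2 * L - 1 - (r + (q - p)) % L + n) % L < L from Nat.mod_lt _ hL)]
  rw [← hLdef, ← SwInfra.mod_helper L (r + (q - p)) n hL (by omega)]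
  rw [show r + (q - p) - n = r + (q - p - n) by omega, e1, e2]

lemma SwInfra.pow_mirror {w : ℕ → α} {u : List α} (hu : u ≠ []) {i j p q : ℕ}
    (hpal : ∀ m, i ≤ m → m ≤ j → w m = w (i + j - m))
    (hip : i ≤ p) (hpq : p ≤ q) (hqj : q ≤ j)
    (h : IsPowFactor u (Subword w p q)) :
    IsPowFactor u (Subword w (i + j - q) (i + j - p)) := by
  have hL : 0 < u.length := List.length_pos_iff.mpr hu
  rw [SwInfra.pow_iff w u hu hpq] at h
  rw [SwInfra.pow_iff w u hu (by omega)]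
  rcases h with h | h
  · exact Or.inr (SwInfra.ph_mirror hpal hL h hip hpq hqj)
  · refine Or.inl ?_
    have := SwInfra.ph_mirror hpal (by simpa using hL) h hip hpq hqj
    rwa [List.reverse_reverse] at this

lemma SwInfra.pow_merge {w : ℕ → α} {u : List α} (hu : u ≠ []) {p q p' q' : ℕ}
    (hpp : p ≤ p') (hpq : p' ≤ q) (hqq : q ≤ q') (hov : u.length ≤ q - p' + 1)
    (h1 : IsPowFactor u (Subword w p q)) (h2 : IsPowFactor u (Subword w p' q')) :
    IsPowFactor u (Subword w p q') := by
  have hL : 0 < u.length := List.length_pos_iff.mpr hu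
  have hrl : u.reverse.length = u.length := List.length_reverse
  rw [SwInfra.pow_iff w u hu (by omega)] at h1
  rw [SwInfra.pow_iff w u hu (by omega)] at h2
  rw [SwInfra.pow_iff w u hu (by omega)]
  rcases h1 with h1 | h1 <;> rcases h2 with h2 | h2
  · exact Or.inl (SwInfra.ph_merge rfl hL h1 h2 hpp hpq hqq hov)
  · exact Or.inl (SwInfra.ph_merge (by rw [hrl]) hL h1 h2 hpp hpq hqq hov)
  · exact Or.inr (SwInfra.ph_merge (by rw [hrl]) (by rw [hrl]; exact hL) h1 h2 hpp hpq hqq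
      (by rw [hrl]; exact hov))
  · exact Or.inr (SwInfra.ph_merge rfl (by rw [hrl]; exact hL) h1 h2 hpp hpq hqq
      (by rw [hrl]; exact hov))

lemma SwInfra.pal_pointwise {w : ℕ → α} {i j : ℕ} (hij : i ≤ j)
    (hpal : (Subword w i j).reverse = Subword w i j) :
    ∀ m, i ≤ m → m ≤ j → w m = w (i + j - m) := by
  intro m h1 h2
  have hlen : (Subword w i j).length = j + 1 - i := SwInfra.subword_length w i j
  have hk : m - i < j + 1 - i := by omega
  have h := congrArg (fun l : List α => l[m - i]?) hpal
  rw [List.getElem?_reverse (by rw [hlen]; exact hk)] at h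
  rw [hlen, SwInfra.subword_get?, SwInfra.subword_get?, if_pos (by omega), if_pos (by omega)] at h
  have h' := Option.some.inj h
  rw [show i + (j + 1 - i - 1 - (m - i)) = i + j - m by omega,
    show i + (m - i) = m by omega] at h'
  exact h'.symm

lemma SwInfra.pal_window {w : ℕ → α} {i j lo hi : ℕ}
    (hpal : ∀ m, i ≤ m → m ≤ j → w m = w (i + j - m))
    (hsum : lo + hi = i + j) (hilo : i ≤ lo) (hlohi : lo ≤ hi) (hhij : hi ≤ j) :
    (Subword w lo hi).reverse = Subword w lo hi := by
  apply List.ext_getElem?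
  intro n
  have hlen : (Subword w lo hi).length = hi + 1 - lo := SwInfra.subword_length w lo hi
  rcases lt_or_ge n (hi + 1 - lo) with hn | hn
  · rw [List.getElem?_reverse (by rw [hlen]; exact hn), hlen,
      SwInfra.subword_get?, SwInfra.subword_get?, if_pos (by omega), if_pos hn]
    have e := hpal (lo + n) (by omega) (by omega)
    rw [show i + j - (lo + n) = lo + (hi + 1 - lo - 1 - n) by omega] at e
    exact (congrArg some e).symm
  · rw [List.getElem?_eq_none_iff.mpr (by rw [List.length_reverse, hlen]; omega),
      List.getElem?_eq_none_iff.mpr (by rw [hlen]; omega)]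





lemma SwInfra.run_sep_aux {γ : ℕ} {w : ℕ → α} {u : List α} (hu : u ≠ [])
    {a b a' b' : ℕ} (h : IsRun γ w u a b) (h' : IsRun γ w u a' b')
    (haa : a ≤ a') (hov : a' ≤ b + u.length + 1) : a = a' ∧ b = b' := by
  set L := u.length with hLdef
  have hL0 : 0 < L := List.length_pos_iff.mpr hu
  obtain ⟨hab, hlen, hia, hpow, hnl, hnr⟩ := h
  obtain ⟨hab', hlen', hia', hpow', hnl', hnr'⟩ := h'
  rcases lt_trichotomy b b' with hbb | hbb | hbb
  · exfalso
    have hm : IsPowFactor u (Subword w (a - L) (b' + L)) :=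
      SwInfra.pow_merge hu (by omega) (by omega) (by omega) (by omega) hpow hpow'
    exact hnr (SwInfra.pow_sub hu (le_refl _) (by omega) (by omega) hm)
  · rcases eq_or_lt_of_le haa with heq | hlt
    · exact ⟨heq, hbb⟩
    · exact absurd (SwInfra.pow_sub hu (by omega) (by omega) (by omega) hpow) hnl'
  · exact absurd (SwInfra.pow_sub hu (by omega) (by omega) (by omega) hpow) hnr'

lemma SwInfra.run_sep {γ : ℕ} {w : ℕ → α} {u : List α} (hu : u ≠ [])
    {a b a' b' : ℕ} (h : IsRun γ w u a b) (h' : IsRun γ w u a' b')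
    (hne : ¬(a = a' ∧ b = b')) :
    b + u.length + 2 ≤ a' ∨ b' + u.length + 2 ≤ a := by
  by_contra hcon
  push_neg at hcon
  obtain ⟨hc1, hc2⟩ := hcon
  rcases le_total a a' with hle | hle
  · exact hne (SwInfra.run_sep_aux hu h h' hle (by omega))
  · obtain ⟨x, y⟩ := SwInfra.run_sep_aux hu h' h hle (by omega)
    exact hne ⟨x.symm, y.symm⟩

lemma SwInfra.run_zone {γ : ℕ} {w : ℕ → α} {u : List α} (hu : u ≠ [])
    {a b m : ℕ} (h : IsRun γ w u a b) (h1 : 1 ≤ m)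
    (hm : (a - u.length - 1 ≤ m ∧ m ≤ a - 1) ∨ (b + 1 ≤ m ∧ m ≤ b + u.length + 1)) :
    RpoDom γ w u m := by
  refine ⟨h1, fun a0 b0 h0 hcov => ?_⟩
  have hL0 : 0 < u.length := List.length_pos_iff.mpr hu
  have hab : a < b := h.1
  have hia : u.length + 1 < a := h.2.2.1
  have hab0 : a0 < b0 := h0.1
  by_cases heq : a0 = a ∧ b0 = b
  · omega
  · rcases SwInfra.run_sep hu h0 h heq with hs | hs <;> omega

lemma SwInfra.run_reflect {γ : ℕ} {w : ℕ → α} {u : List α} (hu : u ≠ [])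
    {i j a b : ℕ} (hpal : ∀ m, i ≤ m → m ≤ j → w m = w (i + j - m))
    (h : IsRun γ w u a b) (h1 : i + u.length + 1 ≤ a) (h2 : b + u.length + 1 ≤ j)
    (h3 : u.length + 1 < i + j - b) :
    IsRun γ w u (i + j - b) (i + j - a) := by
  set L := u.length with hLdef
  have hL0 : 0 < L := List.length_pos_iff.mpr hu
  obtain ⟨hab, hlen, hia, hpow, hnl, hnr⟩ := h
  have hbj : b ≤ j := by omega
  refine ⟨by omega, ?_, h3, ?_, ?_, ?_⟩
  · rw [show (i + j - a) - (i + j - b) = b - a by omega]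
    exact hlen
  · have e := SwInfra.pow_mirror hu hpal (show i ≤ a - L by omega) (by omega)
      (show b + L ≤ j by omega) hpow
    rw [show i + j - (b + L) = i + j - b - L by omega,
      show i + j - (a - L) = i + j - a + L by omega] at e
    exact e
  · intro hcon
    rw [show i + j - b - L - 1 = i + j - (b + L + 1) by omega,
      show i + j - a + L = i + j - (a - L) by omega] at hcon
    have e := SwInfra.pow_mirror hu hpal (show i ≤ i + j - (b + L + 1) by omega) (by omega)
      (show i + j - (a - L) ≤ j by omega) hcon
    rw [show i + j - (i + j - (a - L)) = a - L by omega,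
      show i + j - (i + j - (b + L + 1)) = b + L + 1 by omega] at e
    exact hnr e
  · intro hcon
    rw [show i + j - b - L = i + j - (b + L) by omega,
      show i + j - a + L + 1 = i + j - (a - L - 1) by omega] at hcon
    have e := SwInfra.pow_mirror hu hpal (show i ≤ i + j - (b + L) by omega) (by omega)
      (show i + j - (a - L - 1) ≤ j by omega) hcon
    rw [show i + j - (i + j - (a - L - 1)) = a - L - 1 by omega,
      show i + j - (i + j - (b + L)) = b + L by omega] at e
    exact hnl e

lemma SwInfra.symrun_contra {γ : ℕ} {w : ℕ → α} {u : List α} (hu : u ≠ [])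
    {i j a b : ℕ}
    (hpal : ∀ m, i ≤ m → m ≤ j → w m = w (i + j - m))
    (hempty : ∀ m1 m2, ¬ IsCnStdPal γ w u i j m1 m2)
    (hq : IsRun γ w u a b) (hsym : a + b = i + j) (hmarg : i + u.length + 1 ≤ a) :
    False := by
  set L := u.length with hLdef
  have hL0 : 0 < L := List.length_pos_iff.mpr hu
  have hab : a < b := hq.1
  have hia : L + 1 < a := hq.2.2.1
  have hbj : b + L + 1 ≤ j := by omega
  have hzL : ∀ m, a - L - 1 ≤ m → m ≤ a - 1 → RpoDom γ w u m := fun m hm1 hm2 =>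
    SwInfra.run_zone hu hq (by omega) (Or.inl ⟨hm1, hm2⟩)
  have hzR : ∀ m, b + 1 ≤ m → m ≤ b + L + 1 → RpoDom γ w u m := fun m hm1 hm2 =>
    SwInfra.run_zone hu hq (by omega) (Or.inr ⟨hm1, hm2⟩)
  apply hempty (a - L) (b + L)
  refine ⟨⟨by omega, hzL _ (by omega) (by omega), hzR _ (by omega) (by omega),
    ?_, ?_, ?_, ?_⟩, by omega, by omega, by omega⟩
  · exact SwInfra.pal_window hpal (by omega) (by omega) (by omega) (by omega)
  · intro m hm1 hm2
    have hx : m ≤ a - L + L - 1 := le_trans hm2 (min_le_left _ _)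
    exact hzL m (by omega) (by omega)
  · intro m hm1 hm2
    have hx : b + L + 1 - L ≤ m := le_trans (le_max_left _ _) hm1
    exact hzR m (by omega) (by omega)
  · intro m hm1 hm2
    have key : ∀ m', a - L ≤ m' → m' ≤ b + L → (RpoDom γ w u m' ↔ ¬(a ≤ m' ∧ m' ≤ b)) := by
      intro m' h1 h2
      constructor
      · exact fun hd hcov => hd.2 a b hq hcov
      · intro hcov
        rcases lt_or_ge m' a with hx | hx
        · exact SwInfra.run_zone hu hq (by omega) (Or.inl ⟨by omega, by omega⟩)
        · exact SwInfra.run_zone hu hq (by omega) (Or.inr ⟨by omega, by omega⟩)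
    rw [key m (by omega) (by omega), key (a - L + (b + L) - m) (by omega) (by omega)]
    omega

lemma SwInfra.gap_contra {γ : ℕ} {w : ℕ → α} {u : List α} (hu : u ≠ [])
    {i j al bl ar br : ℕ}
    (hpal : ∀ m, i ≤ m → m ≤ j → w m = w (i + j - m))
    (hempty : ∀ m1 m2, ¬ IsCnStdPal γ w u i j m1 m2)
    (hl : IsRun γ w u al bl) (hr : IsRun γ w u ar br)
    (hkey : ar + bl = i + j) (hibl : i ≤ bl) (harj : ar ≤ j) (hblar : bl < ar)
    (hdom : ∀ m, bl + 1 ≤ m → m ≤ ar - 1 → RpoDom γ w u m) : False := by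
  set L := u.length with hLdef
  have hL0 : 0 < L := List.length_pos_iff.mpr hu
  have eal : al < bl := hl.1
  have earb : ar < br := hr.1
  have hial : L + 1 < al := hl.2.2.1
  have hiar : L + 1 < ar := hr.2.2.1
  have hsep : bl + L + 2 ≤ ar := by
    rcases SwInfra.run_sep hu hl hr (fun ⟨_, hy⟩ => by omega) with hs | hs
    · exact hs
    · omega
  have hgap3 : bl + 4 ≤ ar := by
    rcases Nat.lt_or_ge 1 L with hL2 | hL1
    · omega
    · have hL1' : L = 1 := by omega
      by_contra hcon
      have har3 : ar = bl + 3 := by omega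
      obtain ⟨x, hx⟩ := List.length_eq_one_iff.mp (by rw [← hLdef]; exact hL1')
      have hrev : u.reverse = u := by rw [hx]; rfl
      have h1 : Ph w u (al - L) (bl + L) := by
        rcases (SwInfra.pow_iff w u hu (show al - L ≤ bl + L by omega)).mp hl.2.2.2.1 with h | h
        · exact h
        · rwa [hrev] at h
      have h2 : Ph w u (ar - L) (br + L) := by
        rcases (SwInfra.pow_iff w u hu (show ar - L ≤ br + L by omega)).mp hr.2.2.2.1 with h | h
        · exact h
        · rwa [hrev] at h
      apply hl.2.2.2.2.2
      rw [SwInfra.pow_iff w u hu (by omega)]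
      left
      obtain ⟨r1, hr1⟩ := h1
      obtain ⟨r2, hr2⟩ := h2
      refine ⟨r1, fun n hn => ?_⟩
      rcases Nat.lt_or_ge (al - L + n) (bl + L + 1) with hlt | hge
      · exact hr1 n (by omega)
      · have e2 := hr2 0 (by omega)
        rw [show (r2 + 0) % u.length = 0 by rw [← hLdef, hL1']; omega] at e2
        rw [show (r1 + n) % u.length = 0 by rw [← hLdef, hL1']; omega]
        rw [show al - L + n = ar - L + 0 by omega]
        exact e2
  apply hempty (bl + 2) (ar - 2)
  refine ⟨⟨by omega, hdom _ (by omega) (by omega), hdom _ (by omega) (by omega),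
    ?_, ?_, ?_, ?_⟩, by omega, by omega, by omega⟩
  · rw [show bl + 2 - 1 = bl + 1 by omega, show ar - 2 + 1 = ar - 1 by omega]
    exact SwInfra.pal_window hpal (by omega) (by omega) (by omega) (by omega)
  · intro m hm1 hm2
    have hx : m ≤ ar - 2 := le_trans hm2 (min_le_right _ _)
    exact hdom m (by omega) (by omega)
  · intro m hm1 hm2
    have hx : bl + 2 ≤ m := le_trans (le_max_right _ _) hm1
    exact hdom m (by omega) (by omega)
  · intro m hm1 hm2
    exact iff_of_true (hdom m (by omega) (by omega)) (hdom _ (by omega) (by omega))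

lemma SwInfra.straddle_left {γ : ℕ} {w : ℕ → α} {u : List α} (hu : u ≠ [])
    {i j aq bq : ℕ} (hpal : ∀ m, i ≤ m → m ≤ j → w m = w (i + j - m))
    (hq : IsRun γ w u aq bq) (hiq : i ≤ aq) (hqj : bq ≤ j)
    (hs1 : 2*aq ≤ i + j) (hs2 : i + j ≤ 2*bq)
    (hmarg : i + u.length + 1 ≤ aq) : aq + bq = i + j := by
  set L := u.length with hLdef
  have hL0 : 0 < L := List.length_pos_iff.mpr hu
  have eab : aq < bq := hq.1
  have hLa : L + 1 < aq := hq.2.2.1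
  have hpow := hq.2.2.2.1
  have hnl := hq.2.2.2.2.1
  have hnr := hq.2.2.2.2.2
  by_contra hne
  have hj'c : min (bq + L) j = bq + L ∨ min (bq + L) j = j := by
    rcases le_total (bq + L) j with h | h
    · exact Or.inl (min_eq_left h)
    · exact Or.inr (min_eq_right h)
  set j' := min (bq + L) j with hj'
  have hj'a : j' ≤ bq + L := min_le_left _ _
  have hj'b : j' ≤ j := min_le_right _ _
  have hj'd : bq ≤ j' := le_min (by omega) hqj
  have hsrc : IsPowFactor u (Subword w (aq - L) j') :=
    SwInfra.pow_sub hu (le_refl _) (by omega) (by omega) hpow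
  have hmir := SwInfra.pow_mirror hu hpal (show i ≤ aq - L by omega) (by omega) hj'b hsrc
  rw [show i + j - (aq - L) = i + j - aq + L by omega] at hmir
  rcases Nat.lt_or_ge (i + j) (aq + bq) with hcase | hcase
  · rcases le_or_gt (i + j - j') (aq - L - 1) with hbr | hbr
    · have hm := SwInfra.pow_merge hu (show i + j - j' ≤ aq - L by omega) (by omega)
        (by omega) (by omega) hmir hpow
      exact hnl (SwInfra.pow_sub hu (by omega) (by omega) (by omega) hm)
    · omega
  · have hcase' : aq + bq < i + j := by omega
    rcases le_or_gt (i + j - j') (aq - L) with hbr | hbr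
    · exact hnr (SwInfra.pow_sub hu (by omega) (by omega) (by omega) hmir)
    · have hm := SwInfra.pow_merge hu (show aq - L ≤ i + j - j' by omega) (by omega)
        (by omega) (by omega) hpow hmir
      exact hnr (SwInfra.pow_sub hu (le_refl _) (by omega) (by omega) hm)

lemma SwInfra.straddle_right {γ : ℕ} {w : ℕ → α} {u : List α} (hu : u ≠ [])
    {i j aq bq : ℕ} (hpal : ∀ m, i ≤ m → m ≤ j → w m = w (i + j - m))
    (hq : IsRun γ w u aq bq) (hiq : i ≤ aq) (hqj : bq ≤ j)
    (hs1 : 2*aq ≤ i + j) (hs2 : i + j ≤ 2*bq)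
    (hmarg : bq + u.length + 1 ≤ j) : aq + bq = i + j := by
  set L := u.length with hLdef
  have hL0 : 0 < L := List.length_pos_iff.mpr hu
  have eab : aq < bq := hq.1
  have hLa : L + 1 < aq := hq.2.2.1
  have hpow := hq.2.2.2.1
  have hnl := hq.2.2.2.2.1
  have hnr := hq.2.2.2.2.2
  by_contra hne
  have hsc : max (aq - L) i = aq - L ∨ max (aq - L) i = i := by
    rcases le_total i (aq - L) with h | h
    · exact Or.inl (max_eq_left h)
    · exact Or.inr (max_eq_right h)
  set s := max (aq - L) i with hs
  have hsa : aq - L ≤ s := le_max_left _ _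
  have hsb : i ≤ s := le_max_right _ _
  have hsd : s ≤ aq := max_le (by omega) hiq
  have hsrc : IsPowFactor u (Subword w s (bq + L)) :=
    SwInfra.pow_sub hu (by omega) (by omega) (by omega) hpow
  have hmir := SwInfra.pow_mirror hu hpal hsb (by omega) (show bq + L ≤ j by omega) hsrc
  rcases Nat.lt_or_ge (i + j) (aq + bq) with hcase | hcase
  · rcases le_or_gt (bq + L) (i + j - s) with hbr | hbr
    · exact hnl (SwInfra.pow_sub hu (by omega) (by omega) (by omega) hmir)
    · have hm := SwInfra.pow_merge hu (show i + j - (bq + L) ≤ aq - L by omega) (by omega)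
        (by omega) (by omega) hmir hpow
      exact hnl (SwInfra.pow_sub hu (by omega) (by omega) (by omega) hm)
  · have hcase' : aq + bq < i + j := by omega
    have hm := SwInfra.pow_merge hu (show aq - L ≤ i + j - (bq + L) by omega) (by omega)
      (by omega) (by omega) hpow hmir
    exact hnr (SwInfra.pow_sub hu (le_refl _) (by omega) (by omega) hm)

lemma SwInfra.main3 {γ : ℕ} (hγ : 3 ≤ γ) {w : ℕ → α} {u : List α} (hu : u ≠ [])
    {i j : ℕ}
    (hpal : ∀ m, i ≤ m → m ≤ j → w m = w (i + j - m))
    (hempty : ∀ m1 m2, ¬ IsCnStdPal γ w u i j m1 m2)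
    {a1 b1 a2 b2 a3 b3 : ℕ}
    (h1 : IsRun γ w u a1 b1) (h2 : IsRun γ w u a2 b2) (h3 : IsRun γ w u a3 b3)
    (hi1 : i ≤ a1) (hj1 : b1 ≤ j) (hi2 : i ≤ a2) (hj2 : b2 ≤ j) (hi3 : i ≤ a3) (hj3 : b3 ≤ j)
    (h12 : b1 + u.length + 2 ≤ a2) (h23 : b2 + u.length + 2 ≤ a3) : False := by
  classical
  set L := u.length with hLdef
  have hL0 : 0 < L := List.length_pos_iff.mpr hu
  have e1 : a1 < b1 := h1.1
  have e2 : a2 < b2 := h2.1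
  have e3 : a3 < b3 := h3.1
  have hmul : ∀ x y : ℕ, IsRun γ w u x y → L ≤ y - x + 1 := fun x y hxy =>
    le_trans (Nat.le_mul_of_pos_left L (show 0 < γ - 2 by omega)) hxy.2.1
  have g1 : a1 + L ≤ b1 + 1 := by have := hmul a1 b1 h1; omega
  have g2 : a2 + L ≤ b2 + 1 := by have := hmul a2 b2 h2; omega
  have g3 : a3 + L ≤ b3 + 1 := by have := hmul a3 b3 h3; omega
  have ha1 : L + 1 < a1 := h1.2.2.1
  have ha2 : L + 1 < a2 := h2.2.2.1
  have ha3 : L + 1 < a3 := h3.2.2.1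
  have hspan : i + 5*L + 1 ≤ j := by omega
  by_cases hstr : ∃ aq bq, IsRun γ w u aq bq ∧ aq ≤ j ∧ i ≤ bq ∧ 2*aq ≤ i + j ∧ i + j ≤ 2*bq
  · obtain ⟨aq, bq, hq, hqj, hiq, hqs1, hqs2⟩ := hstr
    have eq0 : aq < bq := hq.1
    have gq : aq + L ≤ bq + 1 := by have := hmul aq bq hq; omega
    have haLq : L + 1 < aq := hq.2.2.1
    rcases Nat.lt_or_ge aq i with hqi | hqi
    · -- straddler sticking out left
      have hbqj : bq ≤ j := by
        by_contra hbig
        rcases SwInfra.run_sep hu hq h1 (fun ⟨hx, _⟩ => by omega) with hs | hs <;> omega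
      have hs3 : bq + L + 2 ≤ a3 := by
        rcases SwInfra.run_sep hu hq h3 (fun ⟨hx, _⟩ => by omega) with hs | hs
        · exact hs
        · omega
      have hsrc : IsPowFactor u (Subword w i bq) :=
        SwInfra.pow_sub hu (by omega) (by omega) (by omega) hq.2.2.2.1
      have hmir := SwInfra.pow_mirror hu hpal (le_refl i) (by omega) hbqj hsrc
      rw [show i + j - i = j by omega] at hmir
      rcases le_or_gt (b3 + L) j with hbj | hbj
      · exact h3.2.2.2.2.1 (SwInfra.pow_sub hu (by omega) (by omega) (by omega) hmir)
      · have hm := SwInfra.pow_merge hu (show i + j - bq ≤ a3 - L by omega) (by omega)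
          (by omega) (by omega) hmir h3.2.2.2.1
        exact h3.2.2.2.2.1 (SwInfra.pow_sub hu (by omega) (by omega) (by omega) hm)
    · rcases Nat.lt_or_ge j bq with hjq | hjq
      · -- straddler sticking out right
        have hs1' : b1 + L + 2 ≤ aq := by
          rcases SwInfra.run_sep hu hq h1 (fun ⟨_, hy⟩ => by omega) with hs | hs
          · omega
          · exact hs
        have hsrc : IsPowFactor u (Subword w aq j) :=
          SwInfra.pow_sub hu (by omega) (by omega) (by omega) hq.2.2.2.1
        have hmir := SwInfra.pow_mirror hu hpal hqi (by omega) (le_refl j) hsrc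
        rw [show i + j - j = i by omega] at hmir
        rcases le_or_gt i (a1 - L) with hia | hia
        · exact h1.2.2.2.2.2 (SwInfra.pow_sub hu (by omega) (by omega) (by omega) hmir)
        · have hm := SwInfra.pow_merge hu (show a1 - L ≤ i by omega) (by omega)
            (by omega) (by omega) h1.2.2.2.1 hmir
          exact h1.2.2.2.2.2 (SwInfra.pow_sub hu (le_refl _) (by omega) (by omega) hm)
      · -- straddler inside [i,j]
        have hmarg : b1 + L + 2 ≤ aq ∨ bq + L + 2 ≤ j := by
          by_cases hq1 : aq = a1 ∧ bq = b1
          · right; omega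
          · rcases SwInfra.run_sep hu h1 hq (fun ⟨x, y⟩ => hq1 ⟨x.symm, y.symm⟩) with hs | hs
            · left; exact hs
            · right; omega
        have hqsym : aq + bq = i + j := by
          rcases hmarg with hm | hm
          · exact SwInfra.straddle_left hu hpal hq hqi hjq hqs1 hqs2 (by omega)
          · exact SwInfra.straddle_right hu hpal hq hqi hjq hqs1 hqs2 (by omega)
        exact SwInfra.symrun_contra hu hpal hempty hq hqsym (by omega)
  · -- no straddler
    have hside : ∀ a b, IsRun γ w u a b → a ≤ j → i ≤ b → 2*b < i + j ∨ i + j < 2*a := by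
      intro a b hr haj hib
      by_contra hcon
      push_neg at hcon
      exact hstr ⟨a, b, hr, haj, hib, by omega, by omega⟩
    set SL : Set ℕ := {bb | ∃ aa, IsRun γ w u aa bb ∧ aa ≤ j ∧ i ≤ bb ∧ 2*bb < i + j} with hSL
    set SR : Set ℕ := {aa | ∃ bb, IsRun γ w u aa bb ∧ aa ≤ j ∧ i ≤ bb ∧ i + j < 2*aa} with hSR
    have hbddL : BddAbove SL := ⟨i + j, fun x hx => by obtain ⟨_, _, _, _, h⟩ := hx; omega⟩
    rcases hside a2 b2 h2 (by omega) (by omega) with h2l | h2r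
    · -- middle run left of center
      have hneL : SL.Nonempty := ⟨b2, a2, h2, by omega, by omega, h2l⟩
      obtain ⟨al, runl, halj, hibl, hbl2⟩ := Nat.sSup_mem hneL hbddL
      set bl := sSup SL with hbl
      have hmaxL : ∀ x ∈ SL, x ≤ bl := fun x hx => le_csSup hbddL hx
      have hb2bl : b2 ≤ bl := hmaxL b2 ⟨a2, h2, by omega, by omega, h2l⟩
      have eal : al < bl := runl.1
      have hLal : L + 1 < al := runl.2.2.1
      have galbl : al + L ≤ bl + 1 := by have := hmul al bl runl; omega
      have hmargL : b1 + L + 2 ≤ al := by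
        rcases SwInfra.run_sep hu h1 runl (fun ⟨_, hy⟩ => by omega) with hs | hs
        · exact hs
        · omega
      have hmargR : bl + L + 2 ≤ j := by omega
      have hrefl := SwInfra.run_reflect hu hpal runl (by omega) (by omega) (by omega)
      have hmemR : (i + j - bl) ∈ SR := ⟨i + j - al, hrefl, by omega, by omega, by omega⟩
      obtain ⟨br, runr, harj, hibr, har2⟩ := Nat.sInf_mem (⟨_, hmemR⟩ : SR.Nonempty)
      set ar := sInf SR with har
      have hminR : ∀ x ∈ SR, ar ≤ x := fun x hx => Nat.sInf_le hx
      have harbl : ar ≤ i + j - bl := hminR _ hmemR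
      have earr : ar < br := runr.1
      have hLar : L + 1 < ar := runr.2.2.1
      have garbr : ar + L ≤ br + 1 := by have := hmul ar br runr; omega
      have hkey : ar + bl = i + j := by
        rcases Nat.lt_or_ge ar (i + j - bl) with hlt | hge
        swap
        · omega
        · exfalso
          have hsep2 : br + L + 2 ≤ i + j - bl := by
            rcases SwInfra.run_sep hu runr hrefl (fun ⟨hx, _⟩ => by omega) with hs | hs
            · exact hs
            · omega
          rcases le_or_gt (br + L + 2) j with hbrj | hbrj
          · have hreflr := SwInfra.run_reflect hu hpal runr (by omega) (by omega) (by omega)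
            have hmemL : (i + j - ar) ∈ SL := ⟨i + j - br, hreflr, by omega, by omega, by omega⟩
            have := hmaxL _ hmemL
            omega
          · omega
      have hdom : ∀ m, bl + 1 ≤ m → m ≤ ar - 1 → RpoDom γ w u m := by
        intro m hm1 hm2
        refine ⟨by omega, fun a0 b0 h0 hcov => ?_⟩
        rcases hside a0 b0 h0 (by omega) (by omega) with hx | hx
        · have := hmaxL b0 ⟨a0, h0, by omega, by omega, hx⟩; omega
        · have := hminR a0 ⟨b0, h0, by omega, by omega, hx⟩; omega
      exact SwInfra.gap_contra hu hpal hempty runl runr hkey hibl harj (by omega) hdom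
    · -- middle run right of center
      have hneR : SR.Nonempty := ⟨a2, b2, h2, by omega, by omega, h2r⟩
      obtain ⟨br, runr, harj, hibr, har2⟩ := Nat.sInf_mem hneR
      set ar := sInf SR with har
      have hminR : ∀ x ∈ SR, ar ≤ x := fun x hx => Nat.sInf_le hx
      have hara2 : ar ≤ a2 := hminR a2 ⟨b2, h2, by omega, by omega, h2r⟩
      have earr : ar < br := runr.1
      have hLar : L + 1 < ar := runr.2.2.1
      have garbr : ar + L ≤ br + 1 := by have := hmul ar br runr; omega
      have hsep3 : br + L + 2 ≤ a3 := by
        rcases SwInfra.run_sep hu runr h3 (fun ⟨hx, _⟩ => by omega) with hs | hs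
        · exact hs
        · omega
      have hmargLr : i + L + 1 ≤ ar := by omega
      have hreflr := SwInfra.run_reflect hu hpal runr (by omega)
        (show br + L + 1 ≤ j by omega) (show L + 1 < i + j - br by omega)
      have hmemL : (i + j - ar) ∈ SL := ⟨i + j - br, hreflr, by omega, by omega, by omega⟩
      obtain ⟨al, runl, halj, hibl, hbl2⟩ := Nat.sSup_mem (⟨_, hmemL⟩ : SL.Nonempty) hbddL
      set bl := sSup SL with hbl
      have hmaxL : ∀ x ∈ SL, x ≤ bl := fun x hx => le_csSup hbddL hx
      have hcarbl : i + j - ar ≤ bl := hmaxL _ hmemL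
      have eal : al < bl := runl.1
      have hLal : L + 1 < al := runl.2.2.1
      have galbl : al + L ≤ bl + 1 := by have := hmul al bl runl; omega
      have hkey : ar + bl = i + j := by
        rcases Nat.lt_or_ge (i + j - ar) bl with hlt | hge
        swap
        · omega
        · exfalso
          have hsep2 : (i + j - ar) + L + 2 ≤ al := by
            rcases SwInfra.run_sep hu hreflr runl (fun ⟨_, hy⟩ => by omega) with hs | hs
            · exact hs
            · omega
          have hmargL : i + L + 2 ≤ al := by omega
          have hmargR : bl + L + 2 ≤ j := by omega
          have hrefll := SwInfra.run_reflect hu hpal runl (by omega) (by omega) (by omega)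
          have hmemR : (i + j - bl) ∈ SR := ⟨i + j - al, hrefll, by omega, by omega, by omega⟩
          have := hminR _ hmemR
          omega
      have hdom : ∀ m, bl + 1 ≤ m → m ≤ ar - 1 → RpoDom γ w u m := by
        intro m hm1 hm2
        refine ⟨by omega, fun a0 b0 h0 hcov => ?_⟩
        rcases hside a0 b0 h0 (by omega) (by omega) with hx | hx
        · have := hmaxL b0 ⟨a0, h0, by omega, by omega, hx⟩; omega
        · have := hminR a0 ⟨b0, h0, by omega, by omega, hx⟩; omega
      exact SwInfra.gap_contra hu hpal hempty runl runr hkey hibl harj (by omega) hdom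


/-- a palindrome with no centered standard palindrome contains at
most two runs. -/
theorem no_cstdpal_run_bound {α : Type*} (γ : ℕ) (hγ : 3 ≤ γ)
    (w : ℕ → α) (u : List α) (hw : ¬ UltimatelyPeriodic w) (hu : InPi γ w u)
    (i j : ℕ) (hij : i ≤ j)
    (hpal : (Subword w i j).reverse = Subword w i j)
    (hempty : ∀ m1 m2, ¬ IsCnStdPal γ w u i j m1 m2) :
    RunCountLe γ w u i j 2 := by
  classical
  intro S hS
  by_contra hcard
  push_neg at hcard
  obtain ⟨p1, hp1, p2, hp2, p3, hp3, h12, h13, h23⟩ := Finset.two_lt_card.mp hcard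
  obtain ⟨r1, hi1, hj1⟩ := hS p1 hp1
  obtain ⟨r2, hi2, hj2⟩ := hS p2 hp2
  obtain ⟨r3, hi3, hj3⟩ := hS p3 hp3
  have hu0 : u ≠ [] := hu.1.1
  have hL0 : 0 < u.length := List.length_pos_iff.mpr hu0
  have hpal' : ∀ m, i ≤ m → m ≤ j → w m = w (i + j - m) := SwInfra.pal_pointwise hij hpal
  have g1 : p1.1 < p1.2 := r1.1
  have g2 : p2.1 < p2.2 := r2.1
  have g3 : p3.1 < p3.2 := r3.1
  have hne12 : ¬(p1.1 = p2.1 ∧ p1.2 = p2.2) := fun ⟨x, y⟩ => h12 (Prod.ext_iff.mpr ⟨x, y⟩)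
  have hne13 : ¬(p1.1 = p3.1 ∧ p1.2 = p3.2) := fun ⟨x, y⟩ => h13 (Prod.ext_iff.mpr ⟨x, y⟩)
  have hne23 : ¬(p2.1 = p3.1 ∧ p2.2 = p3.2) := fun ⟨x, y⟩ => h23 (Prod.ext_iff.mpr ⟨x, y⟩)
  rcases SwInfra.run_sep hu0 r1 r2 hne12 with s12 | s12 <;>
    rcases SwInfra.run_sep hu0 r1 r3 hne13 with s13 | s13 <;>
      rcases SwInfra.run_sep hu0 r2 r3 hne23 with s23 | s23
  · exact SwInfra.main3 hγ hu0 hpal' hempty r1 r2 r3 hi1 hj1 hi2 hj2 hi3 hj3 s12 s23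
  · exact SwInfra.main3 hγ hu0 hpal' hempty r1 r3 r2 hi1 hj1 hi3 hj3 hi2 hj2 s13 s23
  · omega
  · exact SwInfra.main3 hγ hu0 hpal' hempty r3 r1 r2 hi3 hj3 hi1 hj1 hi2 hj2 s13 s12
  · exact SwInfra.main3 hγ hu0 hpal' hempty r2 r1 r3 hi2 hj2 hi1 hj1 hi3 hj3 s12 s13
  · omega
  · exact SwInfra.main3 hγ hu0 hpal' hempty r2 r3 r1 hi2 hj2 hi3 hj3 hi1 hj1 s23 s13
  · exact SwInfra.main3 hγ hu0 hpal' hempty r3 r2 r1 hi3 hj3 hi2 hj2 hi1 hj1 s23 s12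
end

section
/- Let w be an infinite non-ultimately periodic word and u ∈ Π_γ(w). Suppose i ≤ n1 ≤ n2 ≤ j, w[i,j] is a palindrome, CnStdPal_{w,u}(i,j) ≠ ∅, and the interval [n1,n2] is disjoint from the maximal centered standard palindrome of w[i,j]. Then the number of u-runs entirely contained in [n1,n2] is at most 1. -/
open scoped BigOperators

variable {α : Type*}

section AuxWord

variable {α : Type*} {β : Type*}

lemma aux_subword_length (w : ℕ → α) (x y : ℕ) : (Subword w x y).length = y + 1 - x := by
  simp [Subword]

lemma aux_subword_getElem (w : ℕ → α) (x y n : ℕ) (h : n < y + 1 - x) :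
    (Subword w x y)[n]'(by simpa [aux_subword_length] using h) = w (x + n) := by
  simp [Subword]

lemma aux_range_map_infix (f : ℕ → β) {a b c : ℕ} (h : a + b ≤ c) :
    ((List.range b).map fun n => f (a + n)) <:+: (List.range c).map f := by
  obtain ⟨r, rfl⟩ : ∃ r, c = a + (b + r) := ⟨c - (a + b), by omega⟩
  refine ⟨(List.range a).map f, (List.range r).map fun n => f (a + b + n), ?_⟩
  simp only [List.range_add, List.map_append, List.map_map, List.append_assoc]
  congr 2
  apply List.map_congr_left
  intro n _
  simp only [Function.comp_apply]
  congr 1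
  omega

lemma aux_subword_infix (w : ℕ → α) {x y x' y' : ℕ} (h1 : x ≤ x') (h2 : y' ≤ y)
    (h3 : x' ≤ y' + 1) : Subword w x' y' <:+: Subword w x y := by
  have he : Subword w x' y' = (List.range (y' + 1 - x')).map fun n => w (x + (x' - x + n)) := by
    unfold Subword
    apply List.map_congr_left
    intro n _
    congr 1; omega
  rw [he]
  exact aux_range_map_infix (f := fun m => w (x + m)) (by omega)

lemma aux_pf_infix {u t s : List α} (h : IsPowFactor u t) (hs : s <:+: t) : IsPowFactor u s := by
  rcases h with ⟨k, hk⟩ | ⟨k, hk⟩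
  exacts [Or.inl ⟨k, hs.trans hk⟩, Or.inr ⟨k, hs.trans hk⟩]

lemma aux_join_comm (k : ℕ) (v : List α) :
    (List.replicate k v).flatten ++ v = v ++ (List.replicate k v).flatten := by
  induction k with
  | zero => simp
  | succ n ih =>
    rw [List.replicate_succ]
    simp only [List.flatten_cons]
    rw [List.append_assoc, ih]

lemma aux_join_replicate_reverse (k : ℕ) (v : List α) :
    ((List.replicate k v).flatten).reverse = (List.replicate k v.reverse).flatten := by
  induction k with
  | zero => simp
  | succ n ih =>
    rw [List.replicate_succ, List.replicate_succ]
    simp only [List.flatten_cons]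
    rw [List.reverse_append, ih, aux_join_comm]

lemma aux_pf_reverse {u t : List α} (h : IsPowFactor u t) : IsPowFactor u t.reverse := by
  rcases h with ⟨k, hk⟩ | ⟨k, hk⟩
  · exact Or.inr ⟨k, by rw [← aux_join_replicate_reverse]; exact List.reverse_infix.mpr hk⟩
  · refine Or.inl ⟨k, ?_⟩
    have h2 := List.reverse_infix.mpr hk
    rwa [aux_join_replicate_reverse, List.reverse_reverse] at h2

lemma aux_mirror_point {w : ℕ → α} {i j : ℕ}
    (hpal : (Subword w i j).reverse = Subword w i j)
    {m : ℕ} (h1 : i ≤ m) (h2 : m ≤ j) : w m = w (i + j - m) := by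
  have hk : m - i < j + 1 - i := by omega
  have e1 : (Subword w i j).reverse[m - i]'(by
      simpa [aux_subword_length] using hk) = (Subword w i j)[m - i]'(by
      simpa [aux_subword_length] using hk) := by
    simp only [hpal]
  rw [List.getElem_reverse] at e1
  rw [aux_subword_getElem w i j (m - i) hk] at e1
  have e2 : (Subword w i j)[(Subword w i j).length - 1 - (m - i)]'(by
      rw [aux_subword_length]; omega) = w (i + (j - m)) := by
    have hk2 : (Subword w i j).length - 1 - (m - i) = (j - m) := by
      rw [aux_subword_length]; omega
    rw [← aux_subword_getElem w i j (j - m) (by omega)]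
    congr 1
  rw [e2] at e1
  have h3 : i + (m - i) = m := by omega
  rw [h3] at e1
  rw [← e1]
  congr 1; omega

lemma aux_mirror_subword {w : ℕ → α} {i j : ℕ}
    (hpal : (Subword w i j).reverse = Subword w i j)
    {x y : ℕ} (hix : i ≤ x) (hxy : x ≤ y) (hyj : y ≤ j) :
    (Subword w x y).reverse = Subword w (i + j - y) (i + j - x) := by
  apply List.ext_getElem
  · simp only [List.length_reverse, aux_subword_length]; omega
  · intro n h1 h2
    have hn : n < y + 1 - x := by
      simpa [List.length_reverse, aux_subword_length] using h1
    rw [List.getElem_reverse]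
    have e1 : (Subword w x y)[(Subword w x y).length - 1 - n]'(by
        rw [aux_subword_length]; omega) = w (x + (y - x - n)) := by
      have hk2 : (Subword w x y).length - 1 - n = y - x - n := by
        rw [aux_subword_length]; omega
      rw [← aux_subword_getElem w x y (y - x - n) (by omega)]
      congr 1
    rw [e1, aux_subword_getElem w (i + j - y) (i + j - x) n (by omega)]
    have hx1 : x + (y - x - n) = y - n := by omega
    rw [hx1]
    have h3 := aux_mirror_point hpal (m := y - n) (by omega) (by omega)
    rw [h3]
    congr 1; omega

end AuxWord
section AuxPow

variable {α : Type*}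

/-- the periodic sequence with base word `v` (default `d` for the empty case). -/
def auxPow (v : List α) (d : α) (n : ℕ) : α := v.getD (n % v.length) d

lemma aux_auxPow_period (v : List α) (d : α) (n : ℕ) :
    auxPow v d (n + v.length) = auxPow v d n := by
  simp [auxPow, Nat.add_mod_right]

lemma aux_auxPow_mod (v : List α) (d : α) (n : ℕ) :
    auxPow v d (n % v.length) = auxPow v d n := by
  simp [auxPow, Nat.mod_mod_of_dvd n (dvd_refl v.length)]

lemma aux_auxPow_mul_period (v : List α) (d : α) (φ k : ℕ) :
    auxPow v d (φ + v.length * k) = auxPow v d φ := by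
  induction k with
  | zero => simp
  | succ m ih =>
    have h1 : φ + v.length * (m + 1) = (φ + v.length * m) + v.length := by ring
    rw [h1, aux_auxPow_period, ih]

lemma aux_auxPow_shift_mod (v : List α) (d : α) (φ n : ℕ) :
    auxPow v d (φ + n % v.length) = auxPow v d (φ + n) := by
  rcases Nat.eq_zero_or_pos v.length with h | h
  · simp [h]
  · conv_rhs => rw [show n = n % v.length + v.length * (n / v.length) by
      rw [Nat.mod_add_div]]
    rw [← Nat.add_assoc, aux_auxPow_mul_period]

/-- join of replicates as a range-map of `auxPow`. -/
lemma aux_join_replicate_eq (v : List α) (d : α) (k : ℕ) :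
    (List.replicate k v).flatten = (List.range (k * v.length)).map (auxPow v d) := by
  induction k with
  | zero => simp
  | succ n ih =>
    rw [List.replicate_succ]
    show v ++ (List.replicate n v).flatten = _
    rw [ih]
    have h1 : (n + 1) * v.length = v.length + n * v.length := by ring
    rw [h1, List.range_add, List.map_append]
    congr 1
    · apply List.ext_getElem (by simp)
      intro m h1 h2
      simp only [List.getElem_map, List.getElem_range]
      have hm : m < v.length := by simpa using h1
      simp [auxPow, Nat.mod_eq_of_lt hm, List.getD_eq_getElem, hm]
    · rw [List.map_map]
      apply List.map_congr_left
      intro m _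
      simp only [Function.comp_apply]
      rw [Nat.add_comm v.length m, aux_auxPow_period]

end AuxPow
section AuxMerge

variable {α : Type*}

lemma aux_window_pf (v : List α) (d : α) (φ L : ℕ) (hv : v ≠ []) :
    ((List.range L).map fun n => auxPow v d (φ + n)) <:+: (List.replicate (φ + L) v).flatten := by
  rw [aux_join_replicate_eq v d]
  apply aux_range_map_infix
  have h1 : 1 ≤ v.length := List.length_pos_iff.mpr hv
  calc φ + L = (φ + L) * 1 := by ring
  _ ≤ (φ + L) * v.length := Nat.mul_le_mul_left _ h1

lemma aux_pf_window {v t : List α} {k : ℕ} (d : α)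
    (h : t <:+: (List.replicate k v).flatten) :
    ∃ φ, ∀ n (hn : n < t.length), t[n] = auxPow v d (φ + n) := by
  obtain ⟨s, t', hst⟩ := h
  refine ⟨s.length, fun n hn => ?_⟩
  have hlen : s.length + n < ((s ++ t) ++ t').length := by
    simp only [List.length_append]; omega
  have e1 : ((s ++ t) ++ t')[s.length + n]'hlen = t[n] := by
    rw [List.getElem_append_left (by simp only [List.length_append]; omega)]
    rw [List.getElem_append_right (by omega)]
    congr 1
    omega
  have hlen2 : s.length + n < ((List.replicate k v).flatten).length := by
    rw [← hst]; exact hlen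
  have e2 : ((s ++ t) ++ t')[s.length + n]'hlen = auxPow v d (s.length + n) := by
    have e3 : ((List.replicate k v).flatten)[s.length + n]'hlen2 = auxPow v d (s.length + n) := by
      have hj := aux_join_replicate_eq v d k
      rw [List.getElem_of_eq hj hlen2]
      simp
    rw [← e3]
    exact List.getElem_of_eq hst hlen
  rw [← e1, e2]

lemma aux_pf_rep {w : ℕ → α} {u : List α} (d : α) {s t : ℕ}
    (h : IsPowFactor u (Subword w s t)) (hst : s ≤ t) :
    ∃ v φ, (v = u ∨ v = u.reverse) ∧ v.length = u.length ∧
      ∀ n, n ≤ t - s → w (s + n) = auxPow v d (φ + n) := by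
  have hkey : ∀ (v : List α) (k : ℕ), Subword w s t <:+: (List.replicate k v).flatten →
      ∃ φ, ∀ n, n ≤ t - s → w (s + n) = auxPow v d (φ + n) := by
    intro v k hvk
    obtain ⟨φ, hφ⟩ := aux_pf_window d hvk
    refine ⟨φ, fun n hn => ?_⟩
    have hn2 : n < t + 1 - s := by omega
    have := hφ n (by rw [aux_subword_length]; exact hn2)
    rwa [aux_subword_getElem w s t n hn2] at this
  rcases h with ⟨k, hk⟩ | ⟨k, hk⟩
  · obtain ⟨φ, hφ⟩ := hkey u k hk
    exact ⟨u, φ, Or.inl rfl, rfl, hφ⟩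
  · obtain ⟨φ, hφ⟩ := hkey u.reverse k hk
    exact ⟨u.reverse, φ, Or.inr rfl, List.length_reverse, hφ⟩

lemma aux_rep_pf {w : ℕ → α} {u v : List α} (d : α) {s t φ : ℕ}
    (hv : v = u ∨ v = u.reverse) (hvne : v ≠ [])
    (rep : ∀ n, n ≤ t - s → w (s + n) = auxPow v d (φ + n)) (hst : s ≤ t) :
    IsPowFactor u (Subword w s t) := by
  have he : Subword w s t = (List.range (t + 1 - s)).map fun n => auxPow v d (φ + n) := by
    unfold Subword
    apply List.map_congr_left
    intro n hn
    exact rep n (by simp at hn; omega)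
  rw [he]
  rcases hv with rfl | rfl
  · exact Or.inl ⟨φ + (t + 1 - s), aux_window_pf v d φ _ hvne⟩
  · exact Or.inr ⟨φ + (t + 1 - s), aux_window_pf _ d φ _ hvne⟩

lemma aux_agree_ext {v1 v2 : List α} (d : α) (hlen : v1.length = v2.length)
    {φ1 φ2 : ℕ} (h : ∀ n, n < v1.length → auxPow v1 d (φ1 + n) = auxPow v2 d (φ2 + n)) :
    ∀ n, auxPow v1 d (φ1 + n) = auxPow v2 d (φ2 + n) := by
  intro n
  rcases Nat.eq_zero_or_pos v1.length with h0 | h0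
  · simp [auxPow, h0, ← hlen, List.length_eq_zero_iff.mp h0,
      List.length_eq_zero_iff.mp (hlen ▸ h0)]
  · rw [← aux_auxPow_shift_mod v1, ← aux_auxPow_shift_mod v2, ← hlen]
    exact h (n % v1.length) (Nat.mod_lt _ h0)

lemma aux_pf_merge {w : ℕ → α} {u : List α} (hu0 : u ≠ []) {s1 t1 s2 t2 : ℕ}
    (h1 : IsPowFactor u (Subword w s1 t1)) (h2 : IsPowFactor u (Subword w s2 t2))
    (hs : s1 ≤ s2) (ho : s2 + u.length ≤ t1 + 1) (ht : t1 ≤ t2) :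
    IsPowFactor u (Subword w s1 t2) := by
  have hℓ : 1 ≤ u.length := List.length_pos_iff.mpr hu0
  set d : α := u.head hu0 with hd
  obtain ⟨v1, φ1, hv1, hlen1, rep1⟩ := aux_pf_rep d h1 (by omega)
  obtain ⟨v2, φ2, hv2, hlen2, rep2⟩ := aux_pf_rep d h2 (by omega)
  have hv1ne : v1 ≠ [] := by
    intro hh; rw [hh] at hlen1; simp at hlen1; omega
  -- agreement on the overlap window of length ≥ u.length
  have hov : ∀ n, n < v2.length → auxPow v2 d (φ2 + n) = auxPow v1 d (φ1 + (s2 - s1) + n) := by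
    intro n hn
    have hn' : n < u.length := by omega
    have e1 := rep2 n (by omega)
    have e2 := rep1 (s2 - s1 + n) (by omega)
    rw [show s1 + (s2 - s1 + n) = s2 + n by omega] at e2
    rw [← e1, e2, Nat.add_assoc]
  have hext := aux_agree_ext d (hlen2.trans hlen1.symm) hov
  have repAll : ∀ n, n ≤ t2 - s1 → w (s1 + n) = auxPow v1 d (φ1 + n) := by
    intro n hn
    by_cases hc : n ≤ t1 - s1
    · exact rep1 n hc
    · have h3 := rep2 (n - (s2 - s1)) (by omega)
      rw [show s2 + (n - (s2 - s1)) = s1 + n by omega] at h3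
      rw [h3, hext (n - (s2 - s1))]
      congr 1
      omega
  exact aux_rep_pf d hv1 hv1ne repAll (by omega)

end AuxMerge
section AuxRuns

variable {α : Type*} {γ : ℕ} {w : ℕ → α} {u : List α}

lemma aux_run_end_unique (hu0 : u ≠ []) {c e e' : ℕ}
    (h : IsRun γ w u c e) (h' : IsRun γ w u c e') : e = e' := by
  have hℓ : 1 ≤ u.length := List.length_pos_iff.mpr hu0
  obtain ⟨hce, -, hcl, hpf, hnL, hnR⟩ := h
  obtain ⟨hce', -, -, hpf', hnL', hnR'⟩ := h'
  by_contra hne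
  rcases Nat.lt_or_ge e e' with hlt | hge
  · exact hnR (aux_pf_infix hpf' (aux_subword_infix w le_rfl (by omega) (by omega)))
  · have hlt : e' < e := by omega
    exact hnR' (aux_pf_infix hpf (aux_subword_infix w le_rfl (by omega) (by omega)))

lemma aux_runs_sep (hu0 : u ≠ []) {c e c' e' : ℕ}
    (h : IsRun γ w u c e) (h' : IsRun γ w u c' e') (hcc : c < c') :
    e + u.length + 2 ≤ c' := by
  have hℓ : 1 ≤ u.length := List.length_pos_iff.mpr hu0
  obtain ⟨hce, -, hcl, hpf, hnL, hnR⟩ := h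
  obtain ⟨hce', -, hcl', hpf', hnL', hnR'⟩ := h'
  by_contra hcon
  have hlt : c' ≤ e + u.length + 1 := by omega
  rcases le_or_gt e' e with hle | hgt
  · exact hnL' (aux_pf_infix hpf (aux_subword_infix w (by omega) (by omega) (by omega)))
  · have hmerge := aux_pf_merge hu0 hpf hpf' (by omega) (by omega) (by omega)
    exact hnR (aux_pf_infix hmerge (aux_subword_infix w le_rfl (by omega) (by omega)))

end AuxRuns
section AuxRight

variable {α : Type*}

lemma aux_right_case {γ : ℕ} (hγ : 3 ≤ γ) {w : ℕ → α} {u : List α}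
    (hprim : Primitive u)
    {i j a b : ℕ}
    (hpal : (Subword w i j).reverse = Subword w i j)
    (hab : IsStdPal γ w u a b) (hia : i ≤ a) (hbj : b ≤ j) (hcen : a - i = j - b)
    (hmax : ∀ c d, IsCnStdPal γ w u i j c d → d - c ≤ b - a)
    {p q p' q' : ℕ} (hr : IsRun γ w u p q) (hr' : IsRun γ w u p' q')
    (hbp : b < p) (hbp' : b < p') (hqj : q ≤ j) (hq'j : q' ≤ j)
    (hne : (p, q) ≠ (p', q')) : False := by
  have hu0 : u ≠ [] := hprim.1
  have hℓ : 1 ≤ u.length := List.length_pos_iff.mpr hu0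
  obtain ⟨hab1, hab2, hab3, hab4, hab5, hab6, hab7⟩ := hab
  have hRam : RpoDom γ w u (a - 1) :=
    hab5 (a - 1) le_rfl (le_min (by omega) (by omega))
  have ha2 : 2 ≤ a := by have := hRam.1; omega
  have hRb1 : RpoDom γ w u (b + 1) := hab6 (b + 1) (max_le (by omega) (by omega)) le_rfl
  have hsum : a + b = i + j := by omega
  -- the leftmost run inside (b, j]
  have hne1 : Set.Nonempty {c | ∃ e, IsRun γ w u c e ∧ b < c ∧ e ≤ j} := ⟨p, q, hr, hbp, hqj⟩
  obtain ⟨q1, hR1, hbp1, hq1j⟩ := Nat.sInf_mem hne1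
  set p1 := sInf {c | ∃ e, IsRun γ w u c e ∧ b < c ∧ e ≤ j} with hp1def
  have hp1min : ∀ c e, IsRun γ w u c e → b < c → e ≤ j → p1 ≤ c := fun c e h1 h2 h3 =>
    Nat.sInf_le ⟨e, h1, h2, h3⟩
  have hγℓ : u.length ≤ (γ - 2) * u.length := Nat.le_mul_of_pos_left _ (by omega)
  obtain ⟨hR1a, hR1b, hR1c, hR1pf, hR1nL, hR1nR⟩ := hR1
  have hR1' : IsRun γ w u p1 q1 := ⟨hR1a, hR1b, hR1c, hR1pf, hR1nL, hR1nR⟩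
  have hlen1 : p1 + u.length ≤ q1 + 1 := by
    have := le_trans hγℓ hR1b; omega
  have hp1b : b + 2 ≤ p1 := by
    by_contra hcon
    exact hRb1.2 p1 q1 hR1' ⟨by omega, by omega⟩
  -- a second run further right
  have hex2 : Set.Nonempty {c | q1 < c ∧ ∃ e, IsRun γ w u c e ∧ e ≤ j} := by
    rcases Nat.lt_or_ge p1 p with hlt | hge
    · exact ⟨p, by have := aux_runs_sep hu0 hR1' hr hlt; omega, q, hr, hqj⟩
    · have hpp1 : p = p1 := le_antisymm hge (hp1min p q hr hbp hqj)
      have hqq1 : q = q1 := by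
        rw [hpp1] at hr; exact aux_run_end_unique hu0 hr hR1'
      have hp'p1 : p1 < p' := by
        rcases Nat.lt_or_ge p1 p' with h | h
        · exact h
        · exfalso
          have hpp' : p' = p1 := le_antisymm h (hp1min p' q' hr' hbp' hq'j)
          have : q' = q1 := by rw [hpp'] at hr'; exact aux_run_end_unique hu0 hr' hR1'
          exact hne (by rw [hpp1, hqq1, hpp', this])
      exact ⟨p', by have := aux_runs_sep hu0 hR1' hr' hp'p1; omega, q', hr', hq'j⟩
  obtain ⟨hq1p2, q2, hR2, hq2j⟩ := Nat.sInf_mem hex2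
  set p2 := sInf {c | q1 < c ∧ ∃ e, IsRun γ w u c e ∧ e ≤ j} with hp2def
  have hp2min : ∀ c e, IsRun γ w u c e → q1 < c → e ≤ j → p2 ≤ c := fun c e h1 h2 h3 =>
    Nat.sInf_le ⟨h2, e, h1, h3⟩
  have hsep12 : q1 + u.length + 2 ≤ p2 := aux_runs_sep hu0 hR1' hR2 (by omega)
  obtain ⟨hR2a, hR2b, hR2c, hR2pf, hR2nL, hR2nR⟩ := hR2
  have hR2' : IsRun γ w u p2 q2 := ⟨hR2a, hR2b, hR2c, hR2pf, hR2nL, hR2nR⟩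
  have hlen2 : p2 + u.length ≤ q2 + 1 := by
    have := le_trans hγℓ hR2b; omega
  have hq1j2 : q1 + 2 * u.length + 1 ≤ j := by omega
  -- global position facts
  have hGA : i + u.length - 1 ≤ b := by
    by_contra hcon
    omega
  have hp1i : i + u.length + 1 ≤ p1 := by omega
  -- mirror transport of power-factors
  have mirPF : ∀ x y, i ≤ x → x ≤ y → y ≤ j → IsPowFactor u (Subword w x y) →
      IsPowFactor u (Subword w (i + j - y) (i + j - x)) := by
    intro x y h1 h2 h3 hpf
    rw [← aux_mirror_subword hpal h1 h2 h3]
    exact aux_pf_reverse hpf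
  have mirPF' : ∀ x y, i ≤ x → x ≤ y → y ≤ j →
      IsPowFactor u (Subword w (i + j - y) (i + j - x)) → IsPowFactor u (Subword w x y) := by
    intro x y h1 h2 h3 hpf
    have h4 := mirPF _ _ (by omega) (by omega) (by omega) hpf
    rwa [show i + j - (i + j - x) = x by omega, show i + j - (i + j - y) = y by omega] at h4
  -- run-free zones
  have zone1 : ∀ m, b + 1 ≤ m → m ≤ p1 - 1 → RpoDom γ w u m := by
    intro m hm1 hm2
    refine ⟨by omega, fun c e hrun hcov => ?_⟩
    by_cases hcb : c ≤ b + 1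
    · exact hRb1.2 c e hrun ⟨hcb, by omega⟩
    · have hsep := aux_runs_sep hu0 hrun hR1' (by omega)
      have := hp1min c e hrun (by omega) (by omega)
      omega
  have zone2 : ∀ m, q1 + 1 ≤ m → m ≤ p2 - 1 → RpoDom γ w u m := by
    intro m hm1 hm2
    refine ⟨by omega, fun c e hrun hcov => ?_⟩
    have hcq1 : q1 < c := by
      by_contra hle
      rcases Nat.lt_trichotomy c p1 with h | h | h
      · have := aux_runs_sep hu0 hrun hR1' h; omega
      · subst h
        have := aux_run_end_unique hu0 hrun hR1'; omega
      · have := aux_runs_sep hu0 hR1' hrun h; omega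
    have hej : e ≤ j := by
      by_contra hcon
      rcases Nat.lt_trichotomy c p2 with h | h | h
      · have := aux_runs_sep hu0 hrun hR2' h; omega
      · subst h
        have := aux_run_end_unique hu0 hrun hR2'; omega
      · omega
    have := hp2min c e hrun hcq1 hej
    omega
  -- the mirror of the first run is a run
  have hMR1 : IsRun γ w u (i + j - q1) (i + j - p1) := by
    refine ⟨by omega, ?_, by omega, ?_, ?_, ?_⟩
    · rw [show i + j - p1 - (i + j - q1) = q1 - p1 by omega]; exact hR1b
    · have h4 := mirPF (p1 - u.length) (q1 + u.length) (by omega) (by omega) (by omega) hR1pf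
      rwa [show i + j - (q1 + u.length) = i + j - q1 - u.length by omega,
        show i + j - (p1 - u.length) = i + j - p1 + u.length by omega] at h4
    · intro hpf
      apply hR1nR
      refine mirPF' (p1 - u.length) (q1 + u.length + 1) (by omega) (by omega) (by omega) ?_
      rwa [show i + j - (q1 + u.length + 1) = i + j - q1 - u.length - 1 by omega,
        show i + j - (p1 - u.length) = i + j - p1 + u.length by omega]
    · intro hpf
      apply hR1nL
      refine mirPF' (p1 - u.length - 1) (q1 + u.length) (by omega) (by omega) (by omega) ?_
      rwa [show i + j - (q1 + u.length) = i + j - q1 - u.length by omega,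
        show i + j - (p1 - u.length - 1) = i + j - p1 + u.length + 1 by omega]
  -- transport of dominated positions to the mirror side
  have hT : ∀ x, ((b + 1 ≤ x ∧ x ≤ p1 - 1) ∨ (q1 + 1 ≤ x ∧ x ≤ q1 + u.length + 1)) →
      RpoDom γ w u (i + j - x) := by
    intro x hx
    have hxdom : RpoDom γ w u x := by
      rcases hx with ⟨h1, h2⟩ | ⟨h1, h2⟩
      · exact zone1 x h1 h2
      · exact zone2 x h1 (by omega)
    have hxj : x ≤ j := by rcases hx with ⟨h1, h2⟩ | ⟨h1, h2⟩ <;> omega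
    have hxb : b + 1 ≤ x := by rcases hx with ⟨h1, h2⟩ | ⟨h1, h2⟩ <;> omega
    refine ⟨by omega, fun c e hrun hcov => ?_⟩
    have hσ : i + j - x ≤ a - 1 := by omega
    by_cases hea : a - 1 ≤ e
    · exact hRam.2 c e hrun ⟨by omega, hea⟩
    · have hea2 : e ≤ a - 2 := by omega
      obtain ⟨hce, hlenr, hcl, hcpf, hcnL, hcnR⟩ := hrun
      have hrun' : IsRun γ w u c e := ⟨hce, hlenr, hcl, hcpf, hcnL, hcnR⟩
      have hσe_x : i + j - e ≤ x := by omega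
      have hσe_big : e + 4 ≤ i + j - e := by omega
      by_cases hci : i + u.length + 1 ≤ c
      · have hmr : IsRun γ w u (i + j - e) (i + j - c) := by
          refine ⟨by omega, ?_, by omega, ?_, ?_, ?_⟩
          · rw [show i + j - c - (i + j - e) = e - c by omega]; exact hlenr
          · have h4 := mirPF (c - u.length) (e + u.length) (by omega) (by omega) (by omega) hcpf
            rwa [show i + j - (e + u.length) = i + j - e - u.length by omega,
              show i + j - (c - u.length) = i + j - c + u.length by omega] at h4
          · intro hpf
            apply hcnR
            refine mirPF' (c - u.length) (e + u.length + 1) (by omega) (by omega) (by omega) ?_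
            rwa [show i + j - (e + u.length + 1) = i + j - e - u.length - 1 by omega,
              show i + j - (c - u.length) = i + j - c + u.length by omega]
          · intro hpf
            apply hcnL
            refine mirPF' (c - u.length - 1) (e + u.length) (by omega) (by omega) (by omega) ?_
            rwa [show i + j - (e + u.length) = i + j - e - u.length by omega,
              show i + j - (c - u.length - 1) = i + j - c + u.length + 1 by omega]
        exact hxdom.2 _ _ hmr ⟨by omega, by omega⟩
      · have hc2 : c ≤ i + u.length := by omega
        have hpfA : IsPowFactor u (Subword w i (e + u.length)) :=
          aux_pf_infix hcpf (aux_subword_infix w (by omega) le_rfl (by omega))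
        have hpfB := mirPF i (e + u.length) le_rfl (by omega) (by omega) hpfA
        rw [show i + j - i = j by omega] at hpfB
        by_cases hsp : i + j - e ≤ p1
        · exact hR1nR (aux_pf_infix hpfB (aux_subword_infix w (by omega) (by omega) (by omega)))
        · have hx2 : x ≤ q1 + u.length + 1 := by
            rcases hx with ⟨h1, h2⟩ | ⟨h1, h2⟩
            · omega
            · omega
          have hmerge := aux_pf_merge hu0 hR1pf hpfB (by omega) (by omega) (by omega)
          exact hR1nR (aux_pf_infix hmerge (aux_subword_infix w le_rfl (by omega) (by omega)))
  -- symmetry of domination on [b+1, q1+ℓ]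
  have hSYMC : ∀ m, b + 1 ≤ m → m ≤ q1 + u.length →
      (RpoDom γ w u m ↔ RpoDom γ w u (i + j - m)) := by
    intro m hm1 hm2
    rcases Nat.lt_or_ge m p1 with hmp | hmp
    · exact iff_of_true (zone1 m hm1 (by omega)) (hT m (Or.inl ⟨hm1, by omega⟩))
    · rcases le_or_gt m q1 with hmq | hmq
      · refine iff_of_false (fun hR => hR.2 _ _ hR1' ⟨hmp, hmq⟩)
          (fun hR => hR.2 _ _ hMR1 ⟨by omega, by omega⟩)
      · exact iff_of_true (zone2 m (by omega) (by omega)) (hT m (Or.inr ⟨by omega, by omega⟩))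
  -- the larger centered standard palindrome
  have hq1b : b + u.length + 1 ≤ q1 := by omega
  have hcsp2 : IsCnStdPal γ w u i j (i + j - (q1 + u.length)) (q1 + u.length) := by
    refine ⟨⟨by omega, ?_, ?_, ?_, ?_, ?_, ?_⟩, by omega, by omega, by omega⟩
    · exact hT (q1 + u.length) (Or.inr ⟨by omega, by omega⟩)
    · exact zone2 (q1 + u.length) (by omega) (by omega)
    · rw [show i + j - (q1 + u.length) - 1 = i + j - (q1 + u.length + 1) by omega]
      have h4 := aux_mirror_subword hpal (x := i + j - (q1 + u.length + 1))
        (y := q1 + u.length + 1) (by omega) (by omega) (by omega)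
      rwa [show i + j - (i + j - (q1 + u.length + 1)) = q1 + u.length + 1 by omega] at h4
    · intro m hm1 hm2
      have hm2' : m ≤ i + j - (q1 + u.length) + u.length - 1 :=
        le_trans hm2 (min_le_left _ _)
      have h4 := hT (i + j - m) (Or.inr ⟨by omega, by omega⟩)
      rwa [show i + j - (i + j - m) = m by omega] at h4
    · intro m hm1 hm2
      have hm1' : q1 + u.length + 1 - u.length ≤ m := le_trans (le_max_left _ _) hm1
      exact zone2 m (by omega) (by omega)
    · intro m hm1 hm2
      have e7 : i + j - (q1 + u.length) + (q1 + u.length) - m = i + j - m := by omega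
      rw [e7]
      rcases le_or_gt m (a - 1) with hma | hma
      · have h4 := (hSYMC (i + j - m) (by omega) (by omega)).symm
        rwa [show i + j - (i + j - m) = m by omega] at h4
      · rcases le_or_gt m b with hmb | hmb
        · have h4 := hab7 m (by omega) hmb
          rwa [show i + j - m = a + b - m by omega]
        · exact hSYMC m (by omega) hm2
  have hcon := hmax _ _ hcsp2
  omega

end AuxRight
section AuxLeft

variable {α : Type*}

lemma aux_left_case {γ : ℕ} (hγ : 3 ≤ γ) {w : ℕ → α} {u : List α}
    (hprim : Primitive u)
    (hpre : ¬ IsPowFactor u ((List.range (γ * u.length)).map fun n => w (1 + n)))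
    {i j a b : ℕ}
    (hpal : (Subword w i j).reverse = Subword w i j)
    (hab : IsStdPal γ w u a b) (hia : i ≤ a) (hbj : b ≤ j) (hcen : a - i = j - b)
    (hmax : ∀ c d, IsCnStdPal γ w u i j c d → d - c ≤ b - a)
    {p q p' q' : ℕ} (hr : IsRun γ w u p q) (hr' : IsRun γ w u p' q')
    (hqa : q < a) (hq'a : q' < a) (hip : i ≤ p) (hip' : i ≤ p')
    (hne : (p, q) ≠ (p', q')) : False := by
  have hu0 : u ≠ [] := hprim.1
  have hℓ : 1 ≤ u.length := List.length_pos_iff.mpr hu0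
  obtain ⟨hab1, hab2, hab3, hab4, hab5, hab6, hab7⟩ := hab
  have hRam : RpoDom γ w u (a - 1) :=
    hab5 (a - 1) le_rfl (le_min (by omega) (by omega))
  have ha2 : 2 ≤ a := by have := hRam.1; omega
  have hRb1 : RpoDom γ w u (b + 1) := hab6 (b + 1) (max_le (by omega) (by omega)) le_rfl
  have hsum : a + b = i + j := by omega
  have hγℓ : u.length ≤ (γ - 2) * u.length := Nat.le_mul_of_pos_left _ (by omega)
  have hmul : (γ - 2) * u.length = γ * u.length - 2 * u.length := Nat.sub_mul γ 2 u.length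
  have hmul2 : 2 * u.length ≤ γ * u.length := Nat.mul_le_mul_right _ (by omega)
  -- the rightmost run inside [i, a-1]
  have hbdd : BddAbove {e | ∃ c, IsRun γ w u c e ∧ i ≤ c ∧ e < a} := by
    refine ⟨a, fun e he => ?_⟩
    obtain ⟨c, -, -, h3⟩ := he
    omega
  have hne1 : Set.Nonempty {e | ∃ c, IsRun γ w u c e ∧ i ≤ c ∧ e < a} := ⟨q, p, hr, hip, hqa⟩
  obtain ⟨p1, hR1, hip1, hq1a⟩ := Nat.sSup_mem hne1 hbdd
  set q1 := sSup {e | ∃ c, IsRun γ w u c e ∧ i ≤ c ∧ e < a} with hq1def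
  have hq1max : ∀ c e, IsRun γ w u c e → i ≤ c → e < a → e ≤ q1 := fun c e h1 h2 h3 =>
    le_csSup hbdd ⟨c, h1, h2, h3⟩
  obtain ⟨hR1a, hR1b, hR1c, hR1pf, hR1nL, hR1nR⟩ := hR1
  have hR1' : IsRun γ w u p1 q1 := ⟨hR1a, hR1b, hR1c, hR1pf, hR1nL, hR1nR⟩
  have hlen1 : p1 + u.length ≤ q1 + 1 := by
    have := le_trans hγℓ hR1b; omega
  have hq1a2 : q1 ≤ a - 2 := by
    by_contra hcon
    exact hRam.2 p1 q1 hR1' ⟨by omega, by omega⟩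
  -- the second rightmost run
  have hbdd2 : BddAbove {e | ∃ c, IsRun γ w u c e ∧ i ≤ c ∧ e < p1} := by
    refine ⟨p1, fun e he => ?_⟩
    obtain ⟨c, -, -, h3⟩ := he
    omega
  have hne2 : Set.Nonempty {e | ∃ c, IsRun γ w u c e ∧ i ≤ c ∧ e < p1} := by
    rcases Nat.lt_trichotomy p p1 with hlt | heq | hgt
    · have := aux_runs_sep hu0 hr hR1' hlt
      exact ⟨q, p, hr, hip, by omega⟩
    · have hqq1 : q = q1 := by
        rw [heq] at hr; exact aux_run_end_unique hu0 hr hR1'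
      rcases Nat.lt_trichotomy p' p1 with hlt' | heq' | hgt'
      · have := aux_runs_sep hu0 hr' hR1' hlt'
        exact ⟨q', p', hr', hip', by omega⟩
      · exfalso
        have : q' = q1 := by rw [heq'] at hr'; exact aux_run_end_unique hu0 hr' hR1'
        exact hne (by rw [heq, hqq1, heq', this])
      · exfalso
        have h5 := aux_runs_sep hu0 hR1' hr' hgt'
        have h6 := hq1max p' q' hr' hip' hq'a
        have := hr'.1
        omega
    · exfalso
      have h5 := aux_runs_sep hu0 hR1' hr hgt
      have h6 := hq1max p q hr hip hqa
      have := hr.1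
      omega
  obtain ⟨p2, hR2, hip2, hq2p1⟩ := Nat.sSup_mem hne2 hbdd2
  set q2 := sSup {e | ∃ c, IsRun γ w u c e ∧ i ≤ c ∧ e < p1} with hq2def
  have hq2max : ∀ c e, IsRun γ w u c e → i ≤ c → e < p1 → e ≤ q2 := fun c e h1 h2 h3 =>
    le_csSup hbdd2 ⟨c, h1, h2, h3⟩
  obtain ⟨hR2a, hR2b, hR2c, hR2pf, hR2nL, hR2nR⟩ := hR2
  have hR2' : IsRun γ w u p2 q2 := ⟨hR2a, hR2b, hR2c, hR2pf, hR2nL, hR2nR⟩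
  have hlen2 : p2 + u.length ≤ q2 + 1 := by
    have := le_trans hγℓ hR2b; omega
  have hsep12 : q2 + u.length + 2 ≤ p1 := by
    rcases Nat.lt_trichotomy p2 p1 with hlt | heq | hgt
    · exact aux_runs_sep hu0 hR2' hR1' hlt
    · exfalso
      have : q2 = q1 := by
        rw [heq] at hR2'; exact aux_run_end_unique hu0 hR2' hR1'
      omega
    · exfalso
      have := aux_runs_sep hu0 hR1' hR2' hgt
      omega
  have hGA : i + u.length - 1 ≤ b := by
    by_contra hcon
    omega
  have hR2b' : γ * u.length - 2 * u.length ≤ q2 - p2 + 1 := by rw [← hmul]; exact hR2b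
  have hp1γ : γ * u.length + 3 ≤ p1 := by
    have := hR2c
    omega
  have hp1big : 3 * u.length + 3 ≤ p1 := by omega
  have hp1i : i + 2 * u.length + 1 ≤ p1 := by
    have := hR2c
    omega
  -- mirror transport of power-factors
  have mirPF : ∀ x y, i ≤ x → x ≤ y → y ≤ j → IsPowFactor u (Subword w x y) →
      IsPowFactor u (Subword w (i + j - y) (i + j - x)) := by
    intro x y h1 h2 h3 hpf
    rw [← aux_mirror_subword hpal h1 h2 h3]
    exact aux_pf_reverse hpf
  have mirPF' : ∀ x y, i ≤ x → x ≤ y → y ≤ j →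
      IsPowFactor u (Subword w (i + j - y) (i + j - x)) → IsPowFactor u (Subword w x y) := by
    intro x y h1 h2 h3 hpf
    have h4 := mirPF _ _ (by omega) (by omega) (by omega) hpf
    rwa [show i + j - (i + j - x) = x by omega, show i + j - (i + j - y) = y by omega] at h4
  -- run-free zones
  have zoneA : ∀ m, q1 + 1 ≤ m → m ≤ a - 1 → RpoDom γ w u m := by
    intro m hm1 hm2
    refine ⟨by omega, fun c e hrun hcov => ?_⟩
    have hea : e ≤ a - 2 := by
      by_contra hcon
      exact hRam.2 c e hrun ⟨by omega, by omega⟩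
    rcases Nat.lt_trichotomy c p1 with h | h | h
    · have := aux_runs_sep hu0 hrun hR1' h; omega
    · subst h
      have := aux_run_end_unique hu0 hrun hR1'; omega
    · have h5 := aux_runs_sep hu0 hR1' hrun h
      have h6 := hq1max c e hrun (by omega) (by omega)
      have := hrun.1
      omega
  have zoneG : ∀ m, q2 + 1 ≤ m → m ≤ p1 - 1 → RpoDom γ w u m := by
    intro m hm1 hm2
    refine ⟨by omega, fun c e hrun hcov => ?_⟩
    have hep1 : e < p1 ∧ c < p1 := by
      rcases Nat.lt_trichotomy c p1 with h | h | h
      · have := aux_runs_sep hu0 hrun hR1' h; omega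
      · omega
      · omega
    rcases Nat.lt_trichotomy c p2 with h | h | h
    · have := aux_runs_sep hu0 hrun hR2' h; omega
    · subst h
      have := aux_run_end_unique hu0 hrun hR2'; omega
    · have h6 := hq2max c e hrun (by omega) (by omega)
      omega
  -- the mirror of the rightmost run is a run
  have hMR1 : IsRun γ w u (i + j - q1) (i + j - p1) := by
    refine ⟨by omega, ?_, by omega, ?_, ?_, ?_⟩
    · rw [show i + j - p1 - (i + j - q1) = q1 - p1 by omega]; exact hR1b
    · have h4 := mirPF (p1 - u.length) (q1 + u.length) (by omega) (by omega) (by omega) hR1pf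
      rwa [show i + j - (q1 + u.length) = i + j - q1 - u.length by omega,
        show i + j - (p1 - u.length) = i + j - p1 + u.length by omega] at h4
    · intro hpf
      apply hR1nR
      refine mirPF' (p1 - u.length) (q1 + u.length + 1) (by omega) (by omega) (by omega) ?_
      rwa [show i + j - (q1 + u.length + 1) = i + j - q1 - u.length - 1 by omega,
        show i + j - (p1 - u.length) = i + j - p1 + u.length by omega]
    · intro hpf
      apply hR1nL
      refine mirPF' (p1 - u.length - 1) (q1 + u.length) (by omega) (by omega) (by omega) ?_
      rwa [show i + j - (q1 + u.length) = i + j - q1 - u.length by omega,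
        show i + j - (p1 - u.length - 1) = i + j - p1 + u.length + 1 by omega]
  -- transport of dominated positions to the mirror side
  have hT' : ∀ x, ((p1 - u.length - 1 ≤ x ∧ x ≤ p1 - 1) ∨ (q1 + 1 ≤ x ∧ x ≤ a - 1)) →
      RpoDom γ w u (i + j - x) := by
    intro x hx
    have hxdom : RpoDom γ w u x := by
      rcases hx with ⟨h1, h2⟩ | ⟨h1, h2⟩
      · exact zoneG x (by omega) h2
      · exact zoneA x h1 h2
    have hxa : x ≤ a - 1 := by rcases hx with ⟨h1, h2⟩ | ⟨h1, h2⟩ <;> omega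
    have hxlow : p1 - u.length - 1 ≤ x := by rcases hx with ⟨h1, h2⟩ | ⟨h1, h2⟩ <;> omega
    refine ⟨by omega, fun c e hrun hcov => ?_⟩
    have hcb : b + 2 ≤ c := by
      by_contra hcon
      exact hRb1.2 c e hrun ⟨by omega, by omega⟩
    obtain ⟨hce, hlenr, hcl, hcpf, hcnL, hcnR⟩ := hrun
    have hrun' : IsRun γ w u c e := ⟨hce, hlenr, hcl, hcpf, hcnL, hcnR⟩
    have hcj : c ≤ j := by omega
    by_cases hcase2 : j ≤ e + u.length
    · -- the run reaches (almost) the right end: clamp and merge with R1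
      have hpfA : IsPowFactor u (Subword w (c - u.length) j) :=
        aux_pf_infix hcpf (aux_subword_infix w le_rfl (by omega) (by omega))
      have hpfB := mirPF (c - u.length) j (by omega) (by omega) le_rfl hpfA
      rw [show i + j - j = i by omega,
        show i + j - (c - u.length) = i + j - c + u.length by omega] at hpfB
      by_cases hsp : q1 ≤ i + j - c
      · exact hR1nL (aux_pf_infix hpfB (aux_subword_infix w (by omega) (by omega) (by omega)))
      · have hmerge := aux_pf_merge hu0 hpfB hR1pf (by omega) (by omega) (by omega)
        exact hR1nL (aux_pf_infix hmerge (aux_subword_infix w (by omega) (by omega) (by omega)))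
    · by_cases hcase1 : u.length + 2 ≤ i + j - e
      · -- interior run: its mirror is a run covering x
        have hmr : IsRun γ w u (i + j - e) (i + j - c) := by
          refine ⟨by omega, ?_, by omega, ?_, ?_, ?_⟩
          · rw [show i + j - c - (i + j - e) = e - c by omega]; exact hlenr
          · have h4 := mirPF (c - u.length) (e + u.length) (by omega) (by omega) (by omega) hcpf
            rwa [show i + j - (e + u.length) = i + j - e - u.length by omega,
              show i + j - (c - u.length) = i + j - c + u.length by omega] at h4
          · intro hpf
            apply hcnR
            refine mirPF' (c - u.length) (e + u.length + 1) (by omega) (by omega) (by omega) ?_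
            rwa [show i + j - (e + u.length + 1) = i + j - e - u.length - 1 by omega,
              show i + j - (c - u.length) = i + j - c + u.length by omega]
          · intro hpf
            apply hcnL
            refine mirPF' (c - u.length - 1) (e + u.length) (by omega) (by omega) (by omega) ?_
            rwa [show i + j - (e + u.length) = i + j - e - u.length by omega,
              show i + j - (c - u.length - 1) = i + j - c + u.length + 1 by omega]
        exact hxdom.2 _ _ hmr ⟨by omega, by omega⟩
      · -- boundary case: i = 0 and the mirror window starts at position 1
        have hi0 : i = 0 ∧ i + j - e = u.length + 1 := by omega
        have hpfB := mirPF (c - u.length) (e + u.length) (by omega) (by omega) (by omega) hcpf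
        rw [show i + j - (e + u.length) = 1 by omega,
          show i + j - (c - u.length) = i + j - c + u.length by omega] at hpfB
        have h9 : IsPowFactor u (Subword w 1 (γ * u.length)) :=
          aux_pf_infix hpfB (aux_subword_infix w le_rfl (by omega) (by omega))
        have h10 : Subword w 1 (γ * u.length) = (List.range (γ * u.length)).map fun n => w (1 + n) := by
          unfold Subword
          norm_num
        rw [h10] at h9
        exact hpre h9
  -- symmetry of domination on [p1 - ℓ, a - 1]
  have hSYMC' : ∀ m, p1 - u.length ≤ m → m ≤ a - 1 →
      (RpoDom γ w u m ↔ RpoDom γ w u (i + j - m)) := by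
    intro m hm1 hm2
    rcases Nat.lt_or_ge m p1 with hmp | hmp
    · exact iff_of_true (zoneG m (by omega) (by omega)) (hT' m (Or.inl ⟨by omega, by omega⟩))
    · rcases le_or_gt m q1 with hmq | hmq
      · refine iff_of_false (fun hR => hR.2 _ _ hR1' ⟨hmp, hmq⟩)
          (fun hR => hR.2 _ _ hMR1 ⟨by omega, by omega⟩)
      · exact iff_of_true (zoneA m (by omega) hm2) (hT' m (Or.inr ⟨by omega, hm2⟩))
  -- the larger centered standard palindrome
  have hda : p1 - u.length + 2 * u.length - 1 ≤ q1 := by omega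
  have hcsp2 : IsCnStdPal γ w u i j (p1 - u.length) (i + j - (p1 - u.length)) := by
    refine ⟨⟨by omega, ?_, ?_, ?_, ?_, ?_, ?_⟩, by omega, by omega, by omega⟩
    · exact zoneG (p1 - u.length) (by omega) (by omega)
    · exact hT' (p1 - u.length) (Or.inl ⟨by omega, by omega⟩)
    · rw [show i + j - (p1 - u.length) + 1 = i + j - (p1 - u.length - 1) by omega]
      have h4 := aux_mirror_subword hpal (x := p1 - u.length - 1)
        (y := i + j - (p1 - u.length - 1)) (by omega) (by omega) (by omega)
      rwa [show i + j - (i + j - (p1 - u.length - 1)) = p1 - u.length - 1 by omega] at h4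
    · intro m hm1 hm2
      have hm2' : m ≤ p1 - u.length + u.length - 1 := le_trans hm2 (min_le_left _ _)
      exact zoneG m (by omega) (by omega)
    · intro m hm1 hm2
      have hm1' : i + j - (p1 - u.length) + 1 - u.length ≤ m := le_trans (le_max_left _ _) hm1
      have h4 := hT' (i + j - m) (Or.inl ⟨by omega, by omega⟩)
      rwa [show i + j - (i + j - m) = m by omega] at h4
    · intro m hm1 hm2
      have e7 : p1 - u.length + (i + j - (p1 - u.length)) - m = i + j - m := by omega
      rw [e7]
      rcases le_or_gt m (a - 1) with hma | hma
      · exact hSYMC' m (by omega) hma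
      · rcases le_or_gt m b with hmb | hmb
        · have h4 := hab7 m (by omega) hmb
          rwa [show i + j - m = a + b - m by omega]
        · have h4 := (hSYMC' (i + j - m) (by omega) (by omega)).symm
          rwa [show i + j - (i + j - m) = m by omega] at h4
  have hcon := hmax _ _ hcsp2
  omega

end AuxLeft

/-- an interval disjoint from the maximal centered standard palindrome
of a palindrome contains at most one run. -/
theorem outside_maxCSP_run_bound {α : Type*} (γ : ℕ) (hγ : 3 ≤ γ)
    (w : ℕ → α) (u : List α) (hw : ¬ UltimatelyPeriodic w) (hu : InPi γ w u)
    (i j n1 n2 a b : ℕ) (h1 : i ≤ n1) (h2 : n1 ≤ n2) (h3 : n2 ≤ j)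
    (hpal : (Subword w i j).reverse = Subword w i j)
    (hcsp : IsCnStdPal γ w u i j a b)
    (hmax : ∀ c d, IsCnStdPal γ w u i j c d → d - c ≤ b - a)
    (hdisj : ¬ (n1 ≤ a ∧ a ≤ n2) ∧ ¬ (a ≤ n1 ∧ n1 ≤ b)) :
    RunCountLe γ w u n1 n2 1 := by
  intro S hS
  by_contra hcard
  push_neg at hcard
  obtain ⟨P, hP, Q, hQ, hPQ⟩ := Finset.one_lt_card.mp hcard
  obtain ⟨hrP, hn1P, hPn2⟩ := hS P hP
  obtain ⟨hrQ, hn1Q, hQn2⟩ := hS Q hQ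
  obtain ⟨hcsp1, hia, hbj, hcen⟩ := hcsp
  obtain ⟨P1, P2⟩ := P
  obtain ⟨Q1, Q2⟩ := Q
  simp only at hrP hrQ hn1P hPn2 hn1Q hQn2
  rcases hdisj with ⟨hd1, hd2⟩
  by_cases hca : a ≤ n2
  · have hbn1 : b < n1 := by omega
    exact aux_right_case hγ hu.1 hpal hcsp1 hia hbj hcen hmax hrP hrQ
      (by omega) (by omega) (by omega) (by omega) hPQ
  · have hn2a : n2 < a := by omega
    exact aux_left_case hγ hu.1 hu.2.2.1 hpal hcsp1 hia hbj hcen hmax hrP hrQ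
      (by omega) (by omega) (by omega) (by omega) hPQ
end
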